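/- arXiv:0811.0076 — 10 statements merged into one kernel-verified Lean document; each statement's English description precedes it below -/
import Mathlib

section
/- The polynomial x^24 + x + t divides the additive polynomial L(x)^2 + (t + t^24)·L(x) in F_2(t)[x], where L(x) = x^2048 + t^64·x^512 + t^8·x^16 + t^16·x^8 + x; hence every root of x^24 + x + t lies in an F_2-vector space of dimension at most 12 (the root space of a separable additive polynomial of degree 2^12). -/
open Polynomial

set_option maxRecDepth 100000

noncomputable abbrev Ff : Type := RatFunc (ZMod 2)
noncomputable def PP : Ff[X] := X ^ 24 + X + C RatFunc.X
noncomputable def LL : Ff[X] :=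
  X ^ 2048 + C (RatFunc.X ^ 64) * X ^ 512 + C (RatFunc.X ^ 8) * X ^ 16 +
    C (RatFunc.X ^ 16) * X ^ 8 + X
noncomputable def MM : Ff[X] := LL ^ 2 + C (RatFunc.X + RatFunc.X ^ 24) * LL
noncomputable abbrev A : Type := AdjoinRoot PP
noncomputable abbrev αq : A := AdjoinRoot.root PP
noncomputable abbrev τq : A := AdjoinRoot.mk PP (C RatFunc.X)

theorem key1 : PP ∣ (LL + C (RatFunc.X + RatFunc.X ^ 24)) := by
  have h2F : (2 : Ff) = 0 := by
    haveI : CharP Ff 2 := charP_of_injective_algebraMap' (ZMod 2) (A := Ff) 2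
    have h := CharP.cast_eq_zero Ff 2
    exact_mod_cast h
  have h2 : (2 : A) = 0 := by
    have h : algebraMap Ff A 2 = 2 := map_ofNat _ 2
    rw [← h, h2F, map_zero]
  have hrel : αq ^ 24 + αq + τq = 0 := by
    have h : AdjoinRoot.mk PP (X ^ 24 + X + C RatFunc.X) = 0 := by
      rw [show (X ^ 24 + X + C RatFunc.X : Ff[X]) = PP from rfl]
      exact AdjoinRoot.mk_self
    simpa only [map_add, map_pow, AdjoinRoot.mk_X] using h
  have h5 : αq^32 = αq^9 + τq*αq^8 := by
    linear_combination (αq^8) * hrel + (((-1):A)*αq^9 + ((-1):A)*τq*αq^8) * h2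
  have h6 : αq^64 = αq^18 + τq^2*αq^16 := by
    linear_combination (αq^32 + (αq^9 + τq*αq^8)) * h5 + (τq*αq^17) * h2
  have h7 : αq^128 = αq^13 + τq*αq^12 + τq^4*αq^9 + τq^5*αq^8 := by
    linear_combination (αq^64 + (αq^18 + τq^2*αq^16)) * h6 + (αq^12 + (2:A)*τq^2*αq^10 + τq^4*αq^8) * hrel + (((-1):A)*αq^13 + ((-1):A)*τq*αq^12 + ((-1):A)*τq^2*αq^11 + ((-1):A)*τq^3*αq^10 + ((-1):A)*τq^4*αq^9 + ((-1):A)*τq^5*αq^8) * h2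
  have h8 : αq^256 = τq^8*αq^18 + τq^10*αq^16 + αq^3 + τq*αq^2 + τq^2*αq + τq^3 := by
    linear_combination (αq^128 + (αq^13 + τq*αq^12 + τq^4*αq^9 + τq^5*αq^8)) * h7 + (αq^2 + (2:A)*τq*αq + τq^2) * hrel + (τq^4*αq^22 + (2:A)*τq^5*αq^21 + τq^6*αq^20 + τq^9*αq^17 + ((-1):A)*αq^3 + ((-2):A)*τq*αq^2 + ((-2):A)*τq^2*αq + ((-1):A)*τq^3) * h2
  have h9 : αq^512 = τq^16*αq^13 + τq^17*αq^12 + τq^20*αq^9 + τq^21*αq^8 + αq^6 + τq^2*αq^4 + τq^4*αq^2 + τq^6 := by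
    linear_combination (αq^256 + (τq^8*αq^18 + τq^10*αq^16 + αq^3 + τq*αq^2 + τq^2*αq + τq^3)) * h8 + (τq^16*αq^12 + (2:A)*τq^18*αq^10 + τq^20*αq^8) * hrel + (τq^8*αq^21 + τq^9*αq^20 + (2:A)*τq^10*αq^19 + (2:A)*τq^11*αq^18 + τq^12*αq^17 + τq^13*αq^16 + ((-1):A)*τq^16*αq^13 + ((-1):A)*τq^17*αq^12 + ((-1):A)*τq^18*αq^11 + ((-1):A)*τq^19*αq^10 + ((-1):A)*τq^20*αq^9 + ((-1):A)*τq^21*αq^8 + τq*αq^5 + τq^2*αq^4 + (2:A)*τq^3*αq^3 + τq^4*αq^2 + τq^5*αq) * h2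
  have h10 : αq^1024 = τq^40*αq^18 + τq^42*αq^16 + αq^12 + τq^4*αq^8 + τq^8*αq^4 + τq^32*αq^3 + τq^33*αq^2 + τq^34*αq + τq^12 + τq^35 := by
    linear_combination (αq^512 + (τq^16*αq^13 + τq^17*αq^12 + τq^20*αq^9 + τq^21*αq^8 + αq^6 + τq^2*αq^4 + τq^4*αq^2 + τq^6)) * h9 + (τq^32*αq^2 + (2:A)*τq^33*αq + τq^34) * hrel + (τq^36*αq^22 + (2:A)*τq^37*αq^21 + τq^38*αq^20 + τq^16*αq^19 + τq^17*αq^18 + τq^18*αq^17 + τq^41*αq^17 + τq^19*αq^16 + (2:A)*τq^20*αq^15 + (2:A)*τq^21*αq^14 + (2:A)*τq^22*αq^13 + (2:A)*τq^23*αq^12 + τq^24*αq^11 + τq^2*αq^10 + τq^25*αq^10 + τq^26*αq^9 + τq^4*αq^8 + τq^27*αq^8 + (2:A)*τq^6*αq^6 + τq^8*αq^4 + ((-1):A)*τq^32*αq^3 + τq^10*αq^2 + ((-2):A)*τq^33*αq^2 + ((-2):A)*τq^34*αq + ((-1):A)*τq^35) * h2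
  have h11 : αq^2048 = τq^8*αq^16 + τq^80*αq^13 + τq^81*αq^12 + τq^84*αq^9 + τq^16*αq^8 + τq^85*αq^8 + τq^64*αq^6 + τq^66*αq^4 + τq^68*αq^2 + αq + τq + τq^24 + τq^70 := by
    linear_combination (αq^1024 + (τq^40*αq^18 + τq^42*αq^16 + αq^12 + τq^4*αq^8 + τq^8*αq^4 + τq^32*αq^3 + τq^33*αq^2 + τq^34*αq + τq^12 + τq^35)) * h10 + (τq^80*αq^12 + (2:A)*τq^82*αq^10 + τq^84*αq^8 + (2:A)*τq^40*αq^6 + (2:A)*τq^42*αq^4 + (2:A)*τq^44*αq^2 + (1:A) + (2:A)*τq^46) * hrel + (τq^48*αq^22 + τq^72*αq^21 + τq^4*αq^20 + τq^50*αq^20 + τq^73*αq^20 + (2:A)*τq^74*αq^19 + τq^52*αq^18 + (2:A)*τq^75*αq^18 + τq^76*αq^17 + τq^8*αq^16 + τq^54*αq^16 + τq^77*αq^16 + τq^32*αq^15 + τq^33*αq^14 + τq^34*αq^13 + ((-1):A)*τq^80*αq^13 + (2:A)*τq^12*αq^12 + τq^35*αq^12 + ((-1):A)*τq^81*αq^12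 + τq^36*αq^11 + ((-1):A)*τq^82*αq^11 + τq^37*αq^10 + ((-1):A)*τq^83*αq^10 + τq^38*αq^9 + ((-1):A)*τq^84*αq^9 + τq^16*αq^8 + τq^39*αq^8 + ((-1):A)*τq^85*αq^8 + τq^65*αq^5 + τq^20*αq^4 + τq^66*αq^4 + (2:A)*τq^67*αq^3 + τq^68*αq^2 + ((-1):A)*αq + τq^69*αq + ((-1):A)*τq) * h2
  have hL : αq^2048 + τq^64*αq^512 + τq^8*αq^16 + τq^16*αq^8 + αq = τq + τq^24 := by
    linear_combination h11 + (τq^64) * h9 + (τq^8*αq^16 + τq^80*αq^13 + τq^81*αq^12 + τq^84*αq^9 + τq^16*αq^8 + τq^85*αq^8 + τq^64*αq^6 + τq^66*αq^4 + τq^68*αq^2 + αq + τq^70) * h2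
  rw [← AdjoinRoot.mk_eq_zero]
  have hexp : AdjoinRoot.mk PP (LL + C (RatFunc.X + RatFunc.X ^ 24)) =
      αq ^ 2048 + τq ^ 64 * αq ^ 512 + τq ^ 8 * αq ^ 16 + τq ^ 16 * αq ^ 8 + αq
        + (τq + τq ^ 24) := by
    simp only [LL, C_add, C_pow, map_add, map_mul, map_pow, AdjoinRoot.mk_X]
  rw [hexp]
  linear_combination hL + (τq + τq ^ 24) * h2

theorem key2 : PP ∣ MM := by
  unfold MM
  have h : LL ^ 2 + C (RatFunc.X + RatFunc.X ^ 24) * LL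
      = (LL + C (RatFunc.X + RatFunc.X ^ 24)) * LL := by ring
  rw [h]
  exact key1.mul_right LL

theorem key3 : ∀ (E : Type) [Field E] [Algebra Ff E] [CharP E 2],
    letI := ZMod.algebra E 2
    ∃ S : Submodule (ZMod 2) E, Module.finrank (ZMod 2) S ≤ 12 ∧
      ∀ x : E, aeval x (X ^ 24 + X + C (RatFunc.X : Ff)) = 0 → x ∈ S := by
  intro E _ _ _
  letI := ZMod.algebra E 2
  haveI : DecidableEq E := Classical.decEq E
  have h2E : (2 : E) = 0 := by
    have h := CharP.cast_eq_zero E 2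
    exact_mod_cast h
  have hLv : ∀ z : E, aeval z LL = z ^ 2048 + (algebraMap Ff E RatFunc.X) ^ 64 * z ^ 512
      + (algebraMap Ff E RatFunc.X) ^ 8 * z ^ 16 + (algebraMap Ff E RatFunc.X) ^ 16 * z ^ 8
      + z := by
    intro z
    simp only [LL, map_add, map_mul, map_pow, aeval_X, aeval_C]
  have hMv : ∀ z : E, aeval z MM = (aeval z LL) ^ 2
      + (algebraMap Ff E RatFunc.X + (algebraMap Ff E RatFunc.X) ^ 24) * aeval z LL := by
    intro z
    simp only [MM, map_add, map_mul, map_pow, aeval_C]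
  have hLadd : ∀ x y : E, aeval (x + y) LL = aeval x LL + aeval y LL := by
    intro x y
    rw [hLv, hLv, hLv]
    rw [show (2048 : ℕ) = 2 ^ 11 by norm_num, show (512 : ℕ) = 2 ^ 9 by norm_num,
      show (16 : ℕ) = 2 ^ 4 by norm_num, show (8 : ℕ) = 2 ^ 3 by norm_num]
    simp only [add_pow_char_pow]
    ring
  let f' : E →ₗ[ZMod 2] E :=
    { toFun := fun z => aeval z MM
      map_add' := by
        intro x y
        show aeval (x + y) MM = aeval x MM + aeval y MM
        rw [hMv, hMv, hMv, hLadd]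
        linear_combination (aeval x LL * aeval y LL) * h2E
      map_smul' := by
        intro r x
        simp only [RingHom.id_apply]
        have hr : r = 0 ∨ r = 1 := by revert r; decide
        rcases hr with hr | hr
        · subst hr
          rw [zero_smul, zero_smul, hMv, hLv]
          norm_num
        · subst hr
          rw [one_smul, one_smul] }
  have hfval : ∀ z : E, f' z = aeval z MM := fun _ => rfl
  refine ⟨LinearMap.ker f', ?_, ?_⟩
  · -- finrank bound
    set NN : E[X] := MM.map (algebraMap Ff E) with hNN
    have hM1 : MM.Monic := by
      have hLm : LL.Monic := by
        have h : LL = X ^ 2048 + (C (RatFunc.X ^ 64) * X ^ 512 + C (RatFunc.X ^ 8) * X ^ 16 +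
            C (RatFunc.X ^ 16) * X ^ 8 + X) := by rw [LL]; ring
        rw [h]
        apply monic_X_pow_add
        refine lt_of_le_of_lt (?_ : degree _ ≤ (512:ℕ)) ?_
        · compute_degree!
        · exact_mod_cast (by norm_num : (512:ℕ) < 2048)
      have hLdeg : LL.natDegree = 2048 := by unfold LL; compute_degree!
      have h2d : (LL ^ 2).natDegree = 4096 := by
        rw [natDegree_pow, hLdeg]
      have hdegLL : LL.degree = (2048 : ℕ) := by
        rw [degree_eq_natDegree hLm.ne_zero, hLdeg]
      have hdeg2 : (LL ^ 2).degree = (4096 : ℕ) := by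
        rw [degree_eq_natDegree (hLm.pow 2).ne_zero, h2d]
      refine Monic.add_of_left (hLm.pow 2) ?_
      rw [hdeg2]
      refine lt_of_le_of_lt (degree_mul_le _ _) ?_
      refine lt_of_le_of_lt (add_le_add degree_C_le hdegLL.le) ?_
      rw [zero_add]
      exact_mod_cast (by norm_num : (2048:ℕ) < 4096)
    have hN0 : NN ≠ 0 := (hM1.map _).ne_zero
    have hNdegle : NN.natDegree ≤ 4096 :=
      le_trans natDegree_map_le (by unfold MM LL; compute_degree)
    have hsub : (LinearMap.ker f' : Set E) ⊆ ↑NN.roots.toFinset := by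
      intro y hy
      simp only [SetLike.mem_coe, LinearMap.mem_ker, hfval] at hy
      refine Finset.mem_coe.mpr (Multiset.mem_toFinset.mpr ((mem_roots hN0).mpr ?_))
      show NN.eval y = 0
      have h : eval y NN = aeval y MM := (eval_map _ _).trans (aeval_def _ _).symm
      exact h.trans hy
    have hfin : (LinearMap.ker f' : Set E).Finite :=
      Set.Finite.subset (NN.roots.toFinset.finite_toSet) hsub
    haveI : Fintype (LinearMap.ker f') := hfin.fintype
    have hcard : Fintype.card (LinearMap.ker f') ≤ 4096 := by
      have h1 : (LinearMap.ker f' : Set E).toFinset ⊆ NN.roots.toFinset :=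
        Set.toFinset_subset.mpr hsub
      have h2 := Finset.card_le_card h1
      rw [Set.toFinset_card] at h2
      exact h2.trans ((Multiset.toFinset_card_le _).trans ((NN.card_roots').trans hNdegle))
    have hcard2 : Fintype.card (LinearMap.ker f')
        = 2 ^ Module.finrank (ZMod 2) (LinearMap.ker f') := by
      have h := Module.card_eq_pow_finrank (K := ZMod 2) (V := LinearMap.ker f')
      rwa [ZMod.card] at h
    have hle : (2:ℕ) ^ Module.finrank (ZMod 2) (LinearMap.ker f') ≤ 2 ^ 12 := by
      rw [← hcard2]
      exact le_trans hcard (by norm_num)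
    exact (Nat.pow_le_pow_iff_right (by norm_num)).mp hle
  · intro x hx
    obtain ⟨Q, hQ⟩ := key2
    rw [LinearMap.mem_ker, hfval, hQ, map_mul]
    have hx' : aeval x PP = 0 := hx
    rw [hx', zero_mul]

theorem stmt_3 :
    let t : RatFunc (ZMod 2) := RatFunc.X
    let L : (RatFunc (ZMod 2))[X] :=
      X ^ 2048 + C (t ^ 64) * X ^ 512 + C (t ^ 8) * X ^ 16 + C (t ^ 16) * X ^ 8 + X
    ((X ^ 24 + X + C t) ∣ (L ^ 2 + C (t + t ^ 24) * L)) ∧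
    ∀ (E : Type) [Field E] [Algebra (RatFunc (ZMod 2)) E] [CharP E 2],
      letI := ZMod.algebra E 2
      ∃ S : Submodule (ZMod 2) E, Module.finrank (ZMod 2) S ≤ 12 ∧
        ∀ x : E, aeval x (X ^ 24 + X + C t) = 0 → x ∈ S := by
  intro t L
  exact ⟨key2, key3⟩
end

section
/- Neither the alternating group A_24 nor the symmetric group S_24 embeds as a subgroup of GL_12(F_2). -/
open Matrix

lemma card_GL12 : Nat.card (GL (Fin 12) (ZMod 2)) = 6441762292785762141878919881400879415296000 := by
  rw [Matrix.card_GL_field]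
  decide

lemma aux_dvd {G : Type*} [Group G] (f : G →* GL (Fin 12) (ZMod 2))
    (hf : Function.Injective f) :
    Nat.card G ∣ 6441762292785762141878919881400879415296000 := by
  rw [← card_GL12]
  exact Subgroup.card_dvd_of_injective f hf

lemma fact24 : Nat.factorial 24 = 620448401733239439360000 := by decide

lemma card_A24 : Nat.card (alternatingGroup (Fin 24)) = 310224200866619719680000 := by
  have h := two_mul_card_alternatingGroup (α := Fin 24)
  rw [Fintype.card_perm, Fintype.card_fin, fact24] at h
  rw [Nat.card_eq_fintype_card]
  omega

theorem stmt_4 :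
    (¬ ∃ f : alternatingGroup (Fin 24) →* GL (Fin 12) (ZMod 2), Function.Injective f) ∧
    (¬ ∃ f : Equiv.Perm (Fin 24) →* GL (Fin 12) (ZMod 2), Function.Injective f) := by
  constructor
  · rintro ⟨f, hf⟩
    have := aux_dvd f hf
    rw [card_A24] at this
    norm_num at this
  · rintro ⟨f, hf⟩
    have := aux_dvd f hf
    rw [Nat.card_eq_fintype_card, Fintype.card_perm, Fintype.card_fin, fact24] at this
    norm_num at this
end

section
/- The discriminant with respect to x of the polynomial x^11 + t·x^2 − 1 over F_3(t) equals 1; in particular it is a square in F_3(t), so the Galois group of x^11 + t·x^2 − 1 over F_3(t) is contained in the alternating group A_11. -/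
open Polynomial Finset

lemma aux_prod_neg {R ι : Type*} [CommRing R] (s : Finset ι) (g : ι → R) :
    ∏ i ∈ s, (-g i) = (-1) ^ s.card * ∏ i ∈ s, g i := by
  rw [← Finset.prod_const, ← Finset.prod_mul_distrib]
  simp

lemma aux_eval_deriv {R : Type*} [CommRing R] {n : ℕ} (r : Fin n → R) (k : Fin n) :
    eval (r k) (derivative (∏ i, (X - C (r i)))) = ∏ j ∈ univ.erase k, (r k - r j) := by
  rw [← Finset.mul_prod_erase univ _ (Finset.mem_univ k), derivative_mul]
  simp [eval_prod]

lemma aux_split {K : Type*} [CommRing K] (r : Fin 11 → K) :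
    ∏ k, ∏ j ∈ univ.erase k, (r k - r j)
      = (∏ i, ∏ j ∈ Ioi i, (r j - r i)) * ∏ i, ∏ j ∈ Ioi i, (r i - r j) := by
  have e1 : ∀ k : Fin 11, (univ.erase k) = Iio k ∪ Ioi k := by
    intro k; ext j
    simp only [mem_erase, mem_union, mem_Iio, mem_Ioi, mem_univ, and_true]
    exact ⟨fun hne => hne.lt_or_gt, fun h => h.elim (fun h => h.ne) (fun h => h.ne')⟩
  calc ∏ k, ∏ j ∈ univ.erase k, (r k - r j)
      = ∏ k, ((∏ j ∈ Iio k, (r k - r j)) * ∏ j ∈ Ioi k, (r k - r j)) := by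
        refine Finset.prod_congr rfl fun k _ => ?_
        rw [e1 k, Finset.prod_union (Finset.disjoint_left.mpr
          fun a ha hb => absurd ((mem_Iio.mp ha).trans (mem_Ioi.mp hb)) (lt_irrefl _))]
    _ = (∏ k, ∏ j ∈ Iio k, (r k - r j)) * ∏ k, ∏ j ∈ Ioi k, (r k - r j) :=
        Finset.prod_mul_distrib
    _ = (∏ i, ∏ j ∈ Ioi i, (r j - r i)) * ∏ i, ∏ j ∈ Ioi i, (r i - r j) := by
        congr 1
        exact Finset.prod_comm' (by simp [mem_Iio, mem_Ioi])

lemma aux_vand {K : Type*} [Field K] (r : Fin 11 → K) (e : Equiv.Perm (Fin 11)) :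
    ∏ i, ∏ j ∈ Ioi i, (r (e j) - r (e i))
      = ((Equiv.Perm.sign e : ℤˣ) : K) * ∏ i, ∏ j ∈ Ioi i, (r j - r i) := by
  have h2 : ∏ i, ∏ j ∈ Ioi i, (r (e j) - r (e i))
      = Matrix.det (Matrix.vandermonde (fun i => r (e i))) := (Matrix.det_vandermonde _).symm
  have h3' : Matrix.vandermonde (fun i => r (e i)) = (Matrix.vandermonde r).submatrix e id := by
    ext i j; simp [Matrix.vandermonde, Matrix.submatrix]
  rw [h2, h3', Matrix.det_permute, Matrix.det_vandermonde]

theorem stmt_8 :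
    let K := RatFunc (ZMod 3)
    let f : K[X] := X ^ 11 + C RatFunc.X * X ^ 2 - 1
    let L := f.SplittingField
    ∀ r : Fin 11 → L,
      Polynomial.map (algebraMap K L) f = ∏ i, (X - C (r i)) →
      ((∏ i, ∏ j ∈ Finset.Ioi i, (r i - r j) ^ 2) = 1 ∧
        ∀ (σ : L ≃ₐ[K] L) (e : Equiv.Perm (Fin 11)),
          (∀ i, σ (r i) = r (e i)) → Equiv.Perm.sign e = 1) := by
  intro K f L r h
  haveI : CharP K 3 := charP_of_injective_algebraMap' (ZMod 3) (A := K) 3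
  haveI : CharP L 3 := charP_of_injective_algebraMap' K (A := L) 3
  have h3 : (3 : L) = 0 := CharP.cast_eq_zero L 3
  set T : L := algebraMap K L RatFunc.X with hT
  have hmap : f.map (algebraMap K L) = X ^ 11 + C T * X ^ 2 - 1 := by
    simp [f, Polynomial.map_sub, Polynomial.map_add, Polynomial.map_pow, Polynomial.map_one,
      Polynomial.map_mul, Polynomial.map_X, Polynomial.map_C, hT]
  -- every r k is a root
  have hroot : ∀ k, (r k) ^ 11 + T * (r k) ^ 2 - 1 = 0 := by
    intro k
    have hk := congrArg (eval (r k)) h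
    rw [hmap] at hk
    simp only [eval_sub, eval_add, eval_pow, eval_mul, eval_X, eval_C, eval_one,
      eval_prod] at hk
    rw [hk]
    exact Finset.prod_eq_zero (mem_univ k) (by simp)
  have hne : ∀ k, r k ≠ 0 := by
    intro k hk
    have h0 := hroot k
    rw [hk] at h0
    norm_num at h0
  -- product of the roots is 1
  have hprodr : ∏ k, r k = 1 := by
    have h0 := congrArg (eval 0) h
    rw [hmap] at h0
    simp only [eval_sub, eval_add, eval_pow, eval_mul, eval_X, eval_C, eval_one,
      eval_prod] at h0
    norm_num at h0
    rw [aux_prod_neg] at h0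
    simp only [Finset.card_univ, Fintype.card_fin] at h0
    have : (-1 : L) ^ 11 = -1 := by norm_num
    rw [this] at h0
    linear_combination h0
  -- each inner product over the erased set
  have hder : ∀ k, ∏ j ∈ univ.erase k, (r k - r j) = 2 * (r k)⁻¹ := by
    intro k
    rw [← aux_eval_deriv r k, ← h, hmap]
    have : eval (r k) (derivative (X ^ 11 + C T * X ^ 2 - 1 : L[X]))
        = 11 * (r k) ^ 10 + T * (2 * r k) := by
      simp [derivative_pow]
      ring
    rw [this, eq_mul_inv_iff_mul_eq₀ (hne k)]
    linear_combination 2 * (hroot k) + 3 * (r k) ^ 11 * h3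
  -- total product
  have htot : ∏ k, ∏ j ∈ univ.erase k, (r k - r j) = -1 := by
    rw [Finset.prod_congr rfl fun k _ => hder k, Finset.prod_mul_distrib,
      Finset.prod_const, Finset.prod_inv_distrib, hprodr]
    simp only [Finset.card_univ, Fintype.card_fin, inv_one, mul_one]
    have : (2 : L) ^ 11 = 2048 := by norm_num
    rw [this]
    linear_combination 683 * h3
  -- the discriminant product
  have hD : (∏ i, ∏ j ∈ Finset.Ioi i, (r i - r j) ^ 2) = 1 := by
    have hsplit := aux_split r
    rw [htot] at hsplit
    have hc : (∏ i : Fin 11, ∏ j ∈ Ioi i, (r j - r i)) * ∏ i : Fin 11, ∏ j ∈ Ioi i, (r i - r j)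
        = -(∏ i, ∏ j ∈ Finset.Ioi i, (r i - r j) ^ 2) := by
      rw [← Finset.prod_mul_distrib]
      rw [Finset.prod_congr rfl fun i _ => (Finset.prod_mul_distrib).symm]
      have : ∀ i : Fin 11, ∏ j ∈ Ioi i, (r j - r i) * (r i - r j)
          = (-1) ^ (Ioi i).card * ∏ j ∈ Ioi i, (r i - r j) ^ 2 := by
        intro i
        rw [← aux_prod_neg]
        exact Finset.prod_congr rfl fun j _ => by ring
      rw [Finset.prod_congr rfl fun i _ => this i, Finset.prod_mul_distrib,
        Finset.prod_pow_eq_pow_sum]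
      have hsum : ∑ i : Fin 11, (Ioi i).card = 55 := by decide
      rw [hsum]
      have : (-1 : L) ^ 55 = -1 := by norm_num
      rw [this]
      ring
    rw [hc] at hsplit
    linear_combination hsplit
  refine ⟨hD, ?_⟩
  -- part 2
  intro σ e he
  set δ : L := ∏ i, ∏ j ∈ Ioi i, (r j - r i) with hδdef
  have hδ2 : δ * δ = 1 := by
    have : δ * δ = ∏ i, ∏ j ∈ Ioi i, (r i - r j) ^ 2 := by
      rw [hδdef, ← Finset.prod_mul_distrib]
      refine Finset.prod_congr rfl fun i _ => ?_
      rw [← Finset.prod_mul_distrib]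
      exact Finset.prod_congr rfl fun j _ => by ring
    rw [this, hD]
  have hδcases : δ = 1 ∨ δ = -1 := mul_self_eq_one_iff.mp hδ2
  have hδne : δ ≠ 0 := by
    rcases hδcases with h1 | h1 <;> rw [h1]
    · exact one_ne_zero
    · exact neg_ne_zero.mpr one_ne_zero
  have hσδ : σ δ = δ := by
    rcases hδcases with h1 | h1 <;> rw [h1] <;> simp
  have hperm : σ δ = ((Equiv.Perm.sign e : ℤˣ) : L) * δ := by
    have h1 : σ δ = ∏ i, ∏ j ∈ Ioi i, (r (e j) - r (e i)) := by
      rw [hδdef, map_prod]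
      refine Finset.prod_congr rfl fun i _ => ?_
      rw [map_prod]
      refine Finset.prod_congr rfl fun j _ => ?_
      rw [map_sub, he, he]
    rw [h1, aux_vand r e, ← hδdef]
  have hsign : ((Equiv.Perm.sign e : ℤˣ) : L) = 1 := by
    have := hperm.symm.trans hσδ
    exact mul_right_cancel₀ hδne (by rw [this, one_mul])
  rcases Int.units_eq_one_or (Equiv.Perm.sign e) with hs | hs
  · exact hs
  · exfalso
    rw [hs] at hsign
    simp only [Units.val_neg, Units.val_one, Int.cast_neg, Int.cast_one] at hsign
    have : (1 : L) = 0 := by linear_combination h3 + hsign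
    exact one_ne_zero this
end

section
/- If g(x) = f(x) + t where f(x) is a root-series candidate, then under the substitution u = t^8, any power series f over F_2 with f^24 + f + t = 0 satisfies g^2048 + u^8·g^512 + u·g^16 + u^2·g^8 + g + u^256 + u^72 + u^3 = 0, where g = f + t. -/
open PowerSeries

theorem stmt_9 (f : PowerSeries (ZMod 2))
    (hf : f ^ 24 + f + X = 0) :
    let g := f + X
    let u := (X : PowerSeries (ZMod 2)) ^ 8
    g ^ 2048 + u ^ 8 * g ^ 512 + u * g ^ 16 + u ^ 2 * g ^ 8 + g +
      u ^ 256 + u ^ 72 + u ^ 3 = 0 := by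
  have hC : Function.Injective (C (R := ZMod 2)) := fun a b h => by
    simpa using congrArg (constantCoeff (R := ZMod 2)) h
  haveI : CharP (PowerSeries (ZMod 2)) 2 := charP_of_injective_ringHom hC 2
  have h2 : (2 : PowerSeries (ZMod 2)) = 0 := by
    exact_mod_cast CharP.cast_eq_zero (PowerSeries (ZMod 2)) 2
  have hX : (X : PowerSeries (ZMod 2)) = f ^ 24 + f := by
    linear_combination -hf + X * h2
  have hg : f + X = f ^ 24 := by linear_combination hf - f ^ 24 * h2
  have key : ∀ n : ℕ, (X : PowerSeries (ZMod 2)) ^ 2 ^ n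
      = f ^ (24 * 2 ^ n) + f ^ 2 ^ n := by
    intro n
    rw [hX, add_pow_char_pow, ← pow_mul]
  have h8 := key 3
  have h16 := key 4
  have h64 := key 6
  have h512 := key 9
  have h2048 := key 11
  norm_num at h8 h16 h64 h512 h2048
  intro g u
  show (f + X) ^ 2048 + ((X : PowerSeries (ZMod 2)) ^ 8) ^ 8 * (f + X) ^ 512
      + (X : PowerSeries (ZMod 2)) ^ 8 * (f + X) ^ 16
      + ((X : PowerSeries (ZMod 2)) ^ 8) ^ 2 * (f + X) ^ 8 + (f + X)
      + ((X : PowerSeries (ZMod 2)) ^ 8) ^ 256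
      + ((X : PowerSeries (ZMod 2)) ^ 8) ^ 72
      + ((X : PowerSeries (ZMod 2)) ^ 8) ^ 3 = 0
  rw [hg]
  linear_combination h2048 + X ^ 64 * h512 + (2 * f ^ 12288 + f ^ 512) * h64
    + (X ^ 8 + f ^ 192) * h16 + (2 * f ^ 384 + f ^ 16) * h8
    + (f ^ 49152 + f ^ 13824 + f ^ 12352 + f ^ 2048 + 2 * f ^ 576 + f ^ 392
        + f ^ 208 + f ^ 24) * h2
end

section
/- For each seventh root of unity ε in F_8, the formal power series f_ε = Σ_{i ∈ Ω} ε^{2^{N(i)}} t^i satisfies f_ε^8 + t·f_ε^2 + f_ε = 0 in F_8[[t]], where Ω is the set of nonnegative integers n such that n = 0 or every maximal block of consecutive zeros in the binary expansion of n has length divisible by 3, and N(i) is the number of ones in the binary expansion of i. -/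
open PowerSeries
open scoped Classical

/-- `N i` is the number of ones in the binary expansion of `i`. -/
def binOnes (i : ℕ) : ℕ := (Nat.digits 2 i).count 1

/-- `n ∈ Omega` iff `n = 0` or every maximal block of consecutive zeros in the
binary expansion of `n` has length divisible by 3.  (Splitting the digit list on
the digit 1 yields exactly the maximal runs of zeros, possibly empty.) -/
def inOmega (n : ℕ) : Prop := ∀ p ∈ (Nat.digits 2 n).splitOn 1, 3 ∣ p.length

/-! ### List-level lemmas about `splitOn 1` -/

def omL (l : List ℕ) : Prop := ∀ p ∈ l.splitOn 1, 3 ∣ p.length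

lemma splitOn_one_cons_one (l : List ℕ) : (1 :: l).splitOn 1 = [] :: l.splitOn 1 := by
  simp [List.splitOn, List.splitOnP_cons]

lemma splitOn_one_cons_zero (l : List ℕ) :
    (0 :: l).splitOn 1 = (l.splitOn 1).modifyHead (List.cons 0) := by
  simp [List.splitOn, List.splitOnP_cons]

lemma splitOn_exists (l : List ℕ) : ∃ p ps, l.splitOn 1 = p :: ps :=
  List.exists_cons_of_ne_nil (List.splitOnP_ne_nil _ l)

lemma omL_one_cons (l : List ℕ) : omL (1 :: l) ↔ omL l := by
  unfold omL
  rw [splitOn_one_cons_one]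
  simp

lemma omL_zzz (l : List ℕ) : omL (0 :: 0 :: 0 :: l) ↔ omL l := by
  obtain ⟨p, ps, h⟩ := splitOn_exists l
  unfold omL
  rw [splitOn_one_cons_zero, splitOn_one_cons_zero, splitOn_one_cons_zero, h]
  simp only [List.modifyHead_cons, List.mem_cons, List.length_cons]
  constructor
  · rintro H q (rfl | hq)
    · have := H (0 :: 0 :: 0 :: q) (Or.inl rfl)
      simp at this
      omega
    · exact H q (Or.inr hq)
  · rintro H q (rfl | hq)
    · have := H p (Or.inl rfl)
      simp
      omega
    · exact H q (Or.inr hq)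

lemma not_omL_zo (l : List ℕ) : ¬ omL (0 :: 1 :: l) := by
  intro H
  unfold omL at H
  rw [splitOn_one_cons_zero, splitOn_one_cons_one] at H
  have := H [0] (by simp)
  simp at this

lemma not_omL_zzo (l : List ℕ) : ¬ omL (0 :: 0 :: 1 :: l) := by
  intro H
  unfold omL at H
  rw [splitOn_one_cons_zero, splitOn_one_cons_zero, splitOn_one_cons_one] at H
  have := H [0, 0] (by simp)
  simp at this

/-! ### Digit lemmas -/

lemma digits_two_eq (n : ℕ) (hn : 0 < n) : Nat.digits 2 n = (n % 2) :: Nat.digits 2 (n / 2) :=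
  Nat.digits_def' (by norm_num) hn

lemma digits_odd (k : ℕ) : Nat.digits 2 (2 * k + 1) = 1 :: Nat.digits 2 k := by
  rw [digits_two_eq _ (by omega), show (2*k+1) % 2 = 1 by omega,
    show (2*k+1)/2 = k by omega]

lemma digits_even (k : ℕ) (hk : 0 < k) : Nat.digits 2 (2 * k) = 0 :: Nat.digits 2 k := by
  rw [digits_two_eq _ (by omega), show (2*k) % 2 = 0 by omega,
    show (2*k)/2 = k by omega]

lemma digits_8 (m : ℕ) (hm : 0 < m) :
    Nat.digits 2 (8 * m) = 0 :: 0 :: 0 :: Nat.digits 2 m := by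
  have h1 : (8:ℕ) * m = 2 * (4 * m) := by ring
  have h2 : (4:ℕ) * m = 2 * (2 * m) := by ring
  rw [h1, digits_even _ (by omega), h2, digits_even _ (by omega), digits_even _ hm]

lemma inOmega_iff_omL (n : ℕ) : inOmega n ↔ omL (Nat.digits 2 n) := Iff.rfl

lemma inOmega_zero : inOmega 0 := by
  intro p hp
  simp [List.splitOn, List.splitOnP_nil] at hp
  simp [hp]

lemma inOmega_odd (k : ℕ) : inOmega (2 * k + 1) ↔ inOmega k := by
  rw [inOmega_iff_omL, inOmega_iff_omL, digits_odd, omL_one_cons]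

lemma inOmega_8 (m : ℕ) : inOmega (8 * m) ↔ inOmega m := by
  rcases Nat.eq_zero_or_pos m with rfl | hm
  · simp
  · rw [inOmega_iff_omL, inOmega_iff_omL, digits_8 _ hm, omL_zzz]

lemma not_inOmega_two_odd (k : ℕ) : ¬ inOmega (2 * (2 * k + 1)) := by
  rw [inOmega_iff_omL, digits_even _ (by omega), digits_odd]
  exact not_omL_zo _

lemma not_inOmega_four_odd (k : ℕ) : ¬ inOmega (4 * (2 * k + 1)) := by
  rw [show (4:ℕ) * (2*k+1) = 2 * (2 * (2*k+1)) by ring, inOmega_iff_omL,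
    digits_even _ (by omega), digits_even _ (by omega), digits_odd]
  exact not_omL_zzo _

lemma binOnes_zero : binOnes 0 = 0 := by simp [binOnes]

lemma binOnes_odd (k : ℕ) : binOnes (2 * k + 1) = binOnes k + 1 := by
  show (Nat.digits 2 (2 * k + 1)).count 1 = (Nat.digits 2 k).count 1 + 1
  rw [digits_odd, List.count_cons]
  simp

lemma binOnes_8 (m : ℕ) : binOnes (8 * m) = binOnes m := by
  rcases Nat.eq_zero_or_pos m with rfl | hm
  · simp
  · simp [binOnes, digits_8 _ hm]

/-! ### Power series coefficients of squares in characteristic two -/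

section Sq

variable {K : Type*} [Field K] [CharP K 2]

lemma coeff_sq (f : K⟦X⟧) (n : ℕ) :
    coeff n (f ^ 2) = if 2 ∣ n then (coeff (n / 2) f) ^ 2 else 0 := by
  rw [sq, coeff_mul]
  have hsplit := Finset.sum_filter_add_sum_filter_not (Finset.HasAntidiagonal.antidiagonal n)
    (fun p : ℕ × ℕ => p.1 = p.2) (fun p => coeff p.1 f * coeff p.2 f)
  rw [← hsplit]
  have h2 : ∑ p ∈ (Finset.HasAntidiagonal.antidiagonal n).filter (fun p : ℕ × ℕ => ¬ p.1 = p.2),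
      coeff p.1 f * coeff p.2 f = 0 := by
    refine Finset.sum_involution (fun p _ => p.swap) ?_ ?_ ?_ ?_
    · intro p hp
      simp only [Prod.fst_swap, Prod.snd_swap]
      rw [mul_comm]
      exact CharTwo.add_self_eq_zero _
    · intro p hp _
      simp only [Finset.mem_filter] at hp
      intro h
      exact hp.2 ((congrArg Prod.fst h).symm)
    · intro p hp
      simp only [Finset.mem_filter, Finset.HasAntidiagonal.mem_antidiagonal, Prod.fst_swap,
        Prod.snd_swap] at hp ⊢
      exact ⟨by omega, fun h => hp.2 h.symm⟩
    · intro p hp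
      rfl
  rw [h2, add_zero]
  by_cases hd : 2 ∣ n
  · obtain ⟨m, rfl⟩ := hd
    have : (Finset.HasAntidiagonal.antidiagonal (2 * m)).filter (fun p : ℕ × ℕ => p.1 = p.2) = {(m, m)} := by
      ext p
      simp only [Finset.mem_filter, Finset.HasAntidiagonal.mem_antidiagonal, Finset.mem_singleton, Prod.ext_iff]
      omega
    rw [this, Finset.sum_singleton, if_pos ⟨m, rfl⟩, show 2 * m / 2 = m by omega, sq]
  · have : (Finset.HasAntidiagonal.antidiagonal n).filter (fun p : ℕ × ℕ => p.1 = p.2) = ∅ := by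
      ext p
      simp only [Finset.mem_filter, Finset.HasAntidiagonal.mem_antidiagonal, Finset.notMem_empty, iff_false,
        not_and]
      intro h1 h2
      exact hd ⟨p.2, by omega⟩
    rw [this, Finset.sum_empty, if_neg hd]

lemma coeff_pow8 (f : K⟦X⟧) (n : ℕ) :
    coeff n (f ^ 8) = if 8 ∣ n then (coeff (n / 8) f) ^ 8 else 0 := by
  have h : f ^ 8 = ((f ^ 2) ^ 2) ^ 2 := by ring
  rw [h, coeff_sq]
  by_cases h2 : 2 ∣ n
  · rw [if_pos h2, coeff_sq]
    by_cases h4 : 4 ∣ n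
    · rw [if_pos (by omega : 2 ∣ n / 2), coeff_sq]
      by_cases h8 : 8 ∣ n
      · rw [if_pos (by omega : 2 ∣ n / 2 / 2), if_pos h8,
          show n / 2 / 2 / 2 = n / 8 by omega]
        ring
      · rw [if_neg (by omega : ¬ 2 ∣ n / 2 / 2), if_neg h8]
        ring
    · rw [if_neg (by omega : ¬ 2 ∣ n / 2), if_neg (by omega : ¬ 8 ∣ n)]
      ring
  · rw [if_neg h2, if_neg (by omega : ¬ 8 ∣ n)]

end Sq

lemma main_aux {K : Type*} [Field K] [CharP K 2] (ε : K) (hε : ε ^ 7 = 1) :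
    (PowerSeries.mk fun i => if inOmega i then ε ^ (2 ^ binOnes i) else 0 : K⟦X⟧) ^ 8
      + X * (PowerSeries.mk fun i => if inOmega i then ε ^ (2 ^ binOnes i) else 0 : K⟦X⟧) ^ 2
      + (PowerSeries.mk fun i => if inOmega i then ε ^ (2 ^ binOnes i) else 0 : K⟦X⟧) = 0 := by
  set a : ℕ → K := fun i => if inOmega i then ε ^ (2 ^ binOnes i) else 0 with ha
  set f : K⟦X⟧ := PowerSeries.mk a with hf
  have hcf : ∀ i, coeff i f = a i := fun i => by rw [hf, coeff_mk]
  have hpow8 : ∀ x : K, x ∈ Set.range a → x ^ 8 = x := by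
    rintro x ⟨i, rfl⟩
    by_cases h : inOmega i
    · simp only [ha, if_pos h]
      rw [← pow_mul, show 2 ^ binOnes i * 8 = 7 * 2 ^ binOnes i + 2 ^ binOnes i by ring,
        pow_add, pow_mul, hε, one_pow, one_mul]
    · simp [ha, if_neg h]
  ext n
  rw [map_add, map_add, map_zero, hcf, coeff_pow8]
  rcases Nat.eq_zero_or_pos n with rfl | hn
  · rw [coeff_zero_X_mul]
    rw [if_pos (by omega : (8:ℕ) ∣ 0)]
    have h0 : a 0 = ε := by
      simp [ha, if_pos inOmega_zero, binOnes_zero]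
    simp only [Nat.zero_div, hcf, h0]
    rw [hpow8 ε ⟨0, h0⟩]
    rw [add_zero]
    exact CharTwo.add_self_eq_zero _
  · obtain ⟨m, rfl⟩ := Nat.exists_eq_add_of_lt hn
    rw [zero_add] at *
    rw [coeff_succ_X_mul, coeff_sq, hcf]
    rcases Nat.even_or_odd m with hm | hm
    · -- n = m + 1 odd
      obtain ⟨k, rfl⟩ := hm
      have hmk : k + k = 2 * k := by ring
      rw [hmk]
      rw [if_pos (by omega : (2:ℕ) ∣ 2 * k), if_neg (by omega : ¬ (8:ℕ) ∣ 2 * k + 1),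
        show 2 * k / 2 = k by omega, hcf]
      rw [zero_add]
      by_cases h : inOmega k
      · have h' : inOmega (2 * k + 1) := (inOmega_odd k).mpr h
        simp only [ha, if_pos h, if_pos h', binOnes_odd]
        rw [← pow_mul, show 2 ^ binOnes k * 2 = 2 ^ (binOnes k + 1) by ring]
        exact CharTwo.add_self_eq_zero _
      · have h' : ¬ inOmega (2 * k + 1) := fun hh => h ((inOmega_odd k).mp hh)
        simp [ha, if_neg h, if_neg h']
    · -- n = m + 1 even, positive
      obtain ⟨k, rfl⟩ := hm
      rw [if_neg (by omega : ¬ (2:ℕ) ∣ 2 * k + 1)]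
      rw [add_zero]
      by_cases h8 : (8:ℕ) ∣ 2 * k + 1 + 1
      · obtain ⟨q, hq⟩ := h8
        rw [if_pos (by omega : (8:ℕ) ∣ 2 * k + 1 + 1), show (2 * k + 1 + 1) / 8 = q by omega]
        have haq : a (2 * k + 1 + 1) = a q := by
          rw [show 2 * k + 1 + 1 = 8 * q from hq]
          by_cases h : inOmega q
          · simp only [ha, if_pos h, if_pos ((inOmega_8 q).mpr h), binOnes_8]
          · simp [ha, if_neg h, if_neg (fun hh => h ((inOmega_8 q).mp hh))]
        rw [haq, hpow8 (a q) ⟨q, rfl⟩]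
        exact CharTwo.add_self_eq_zero _
      · rw [if_neg h8, zero_add]
        have hno : ¬ inOmega (2 * k + 1 + 1) := by
          by_cases h4 : (2 * k + 1 + 1) % 4 = 2
          · rw [show 2 * k + 1 + 1 = 2 * (2 * ((2 * k + 1 + 1) / 4) + 1) by omega]
            exact not_inOmega_two_odd _
          · rw [show 2 * k + 1 + 1 = 4 * (2 * ((2 * k + 1 + 1) / 8) + 1) by
              rcases Nat.even_or_odd k with ⟨j, rfl⟩ | ⟨j, rfl⟩ <;> omega]
            exact not_inOmega_four_odd _
        simp [ha, if_neg hno]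

theorem stmt_10 (ε : GaloisField 2 3) (hε : ε ^ 7 = 1) :
    let f : PowerSeries (GaloisField 2 3) :=
      PowerSeries.mk fun i => if inOmega i then ε ^ (2 ^ binOnes i) else 0
    f ^ 8 + X * f ^ 2 + f = 0 := by
  intro f
  exact main_aux ε hε
end

section
/- The polynomial x^4 + x^2 + t·x over F_2[[t]] has exactly one nonzero solution x ∈ t·F_2[[t]] as a formal power series, and this solution begins t + t^3 + t^5 + t^9 + ⋯. -/
open PowerSeries

private noncomputable def sseq : ℕ → PowerSeries (ZMod 2)
  | 0 => 0
  | (k+1) => X + (sseq k)^3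

private lemma sseq_const : ∀ k, constantCoeff (sseq k) = 0
  | 0 => by simp [sseq]
  | (k+1) => by simp [sseq, map_pow, sseq_const k]

private lemma cube_congr {n : ℕ} {y z : PowerSeries (ZMod 2)}
    (hy : constantCoeff y = 0) (hz : constantCoeff z = 0)
    (h : X^n ∣ (y - z)) : X^(n+1) ∣ (y^3 - z^3) := by
  have key : y^3 - z^3 = (y - z) * (y^2 + y*z + z^2) := by ring
  rw [key, pow_succ]
  exact mul_dvd_mul h (X_dvd_iff.2 (by simp [map_pow, hy, hz]))

private lemma sseq_dvd : ∀ k, X^(k+1) ∣ (sseq (k+1) - sseq k)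
  | 0 => by simpa [sseq] using dvd_refl X
  | (k+1) => by
      have h := cube_congr (sseq_const (k+1)) (sseq_const k) (sseq_dvd k)
      have e : sseq (k+2) - sseq (k+1) = (sseq (k+1))^3 - (sseq k)^3 := by
        show (X + (sseq (k+1))^3) - (X + (sseq k)^3) = _
        ring
      rw [e]; exact h

private lemma sseq_coeff_stab {n k : ℕ} (h : n < k) :
    coeff n (sseq k) = coeff n (sseq (n+1)) := by
  obtain ⟨j, rfl⟩ : ∃ j, k = (n+1) + j := ⟨k - (n+1), by omega⟩
  induction j with
  | zero => rfl
  | succ j ih =>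
      have hd := sseq_dvd (n+1+j)
      have h0 : coeff n (sseq (n+1+j+1) - sseq (n+1+j)) = 0 :=
        X_pow_dvd_iff.1 hd n (by omega)
      rw [map_sub, sub_eq_zero] at h0
      have e : n+1+(j+1) = n+1+j+1 := by omega
      rw [e, h0]; exact ih (by omega)

private noncomputable def xsol : PowerSeries (ZMod 2) :=
  PowerSeries.mk (fun n => coeff n (sseq (n+1)))

private lemma xsol_coeff (n k : ℕ) (h : n < k) :
    coeff n xsol = coeff n (sseq k) := by
  rw [xsol, coeff_mk, sseq_coeff_stab h]

private lemma xsol_const : constantCoeff xsol = 0 := by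
  rw [← coeff_zero_eq_constantCoeff_apply, xsol_coeff 0 1 Nat.zero_lt_one,
    coeff_zero_eq_constantCoeff_apply, sseq_const]

private lemma xsol_eq : xsol = X + xsol^3 := by
  ext n
  have h1 : coeff n xsol = coeff n (sseq (n+1)) :=
    xsol_coeff n (n+1) (Nat.lt_succ_self n)
  have hdvd : X^n ∣ (xsol - sseq n) := by
    rw [X_pow_dvd_iff]
    intro m hm
    rw [map_sub, xsol_coeff m n hm, sub_self]
  have h2 := cube_congr xsol_const (sseq_const n) hdvd
  have h3 : coeff n (xsol^3 - (sseq n)^3) = 0 :=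
    X_pow_dvd_iff.1 h2 n (Nat.lt_succ_self n)
  have h4 : coeff n (xsol^3) = coeff n ((sseq n)^3) := by
    rw [map_sub, sub_eq_zero] at h3; exact h3
  rw [h1, show sseq (n+1) = X + (sseq n)^3 from rfl, map_add, map_add, h4]

private lemma two_zero : (2 : PowerSeries (ZMod 2)) = 0 := by
  have h : (2 : PowerSeries (ZMod 2)) = C 2 := by simp [map_ofNat]
  rw [h, show (2:ZMod 2) = 0 from rfl, map_zero]

private lemma xsol_cubic : xsol^3 + xsol + X = 0 := by
  linear_combination (-1 : PowerSeries (ZMod 2)) * xsol_eq + xsol * two_zero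

private lemma keyc (n : ℕ) :
    coeff n xsol = (if n = 1 then 1 else 0) + coeff n (xsol^3) := by
  conv_lhs => rw [xsol_eq]
  rw [map_add, coeff_X]

private lemma hb (m : ℕ) : coeff m (xsol^2) =
    ∑ k ∈ Finset.range (m+1), coeff k xsol * coeff (m-k) xsol := by
  rw [pow_two, coeff_mul, Finset.Nat.sum_antidiagonal_eq_sum_range_succ_mk]

private lemma hcc (n : ℕ) : coeff n (xsol^3) =
    ∑ k ∈ Finset.range (n+1), coeff k (xsol^2) * coeff (n-k) xsol := by
  rw [show (3:ℕ) = 2 + 1 from rfl, pow_succ, coeff_mul,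
    Finset.Nat.sum_antidiagonal_eq_sum_range_succ_mk]

private lemma a0 : coeff 0 xsol = 0 := by
  rw [coeff_zero_eq_constantCoeff_apply]; exact xsol_const
private lemma a1 : coeff 1 xsol = 1 := by
  rw [keyc 1, hcc 1]; simp [Finset.sum_range_succ, hb, a0]
private lemma a2 : coeff 2 xsol = 0 := by
  rw [keyc 2, hcc 2]; simp [Finset.sum_range_succ, hb, a0, a1]
private lemma a3 : coeff 3 xsol = 1 := by
  rw [keyc 3, hcc 3]; simp [Finset.sum_range_succ, hb, a0, a1, a2]
private lemma a4 : coeff 4 xsol = 0 := by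
  rw [keyc 4, hcc 4]; simp [Finset.sum_range_succ, hb, a0, a1, a2, a3]
private lemma a5 : coeff 5 xsol = 1 := by
  rw [keyc 5, hcc 5]; simp [Finset.sum_range_succ, hb, a0, a1, a2, a3, a4]
  decide
private lemma a6 : coeff 6 xsol = 0 := by
  rw [keyc 6, hcc 6]; simp [Finset.sum_range_succ, hb, a0, a1, a2, a3, a4, a5]
private lemma a7 : coeff 7 xsol = 0 := by
  rw [keyc 7, hcc 7]; simp [Finset.sum_range_succ, hb, a0, a1, a2, a3, a4, a5, a6]
  decide
private lemma a8 : coeff 8 xsol = 0 := by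
  rw [keyc 8, hcc 8]; simp [Finset.sum_range_succ, hb, a0, a1, a2, a3, a4, a5, a6, a7]
private lemma a9 : coeff 9 xsol = 1 := by
  rw [keyc 9, hcc 9]; simp [Finset.sum_range_succ, hb, a0, a1, a2, a3, a4, a5, a6, a7, a8]
  decide

theorem stmt_11 :
    ∃ x : PowerSeries (ZMod 2),
      (x ≠ 0 ∧ constantCoeff x = 0 ∧ x ^ 4 + x ^ 2 + X * x = 0) ∧
      (∀ y : PowerSeries (ZMod 2),
        y ≠ 0 → constantCoeff y = 0 → y ^ 4 + y ^ 2 + X * y = 0 → y = x) ∧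
      coeff 1 x = 1 ∧ coeff 3 x = 1 ∧
      coeff 5 x = 1 ∧ coeff 9 x = 1 ∧
      coeff 0 x = 0 ∧ coeff 2 x = 0 ∧
      coeff 4 x = 0 ∧ coeff 6 x = 0 ∧
      coeff 7 x = 0 ∧ coeff 8 x = 0 := by
  refine ⟨xsol, ⟨?_, xsol_const, ?_⟩, ?_, a1, a3, a5, a9, a0, a2, a4, a6, a7, a8⟩
  · intro h
    have := a1
    rw [h] at this
    simp at this
  · linear_combination xsol * xsol_cubic
  · intro y hy hyc hyeq
    have hy3 : y^3 + y + X = 0 := by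
      have hf : y * (y^3 + y + X) = 0 := by linear_combination hyeq
      rcases mul_eq_zero.1 hf with h | h
      · exact absurd h hy
      · exact h
    have hfac : (y - xsol) * (y^2 + y*xsol + xsol^2 + 1) = 0 := by
      linear_combination hy3 - xsol_cubic
    rcases mul_eq_zero.1 hfac with h | h
    · exact sub_eq_zero.1 h
    · exfalso
      have := congrArg (constantCoeff) h
      simp [map_pow, hyc, xsol_const] at this
end

section
/- Let P_1, P_2, P_4 be three roots of x^7 + t·x + 1 in a splitting field over F_2(t) with P_1 + P_2 + P_4 = 0, and set u = P_1·P_2 + P_2·P_4 + P_4·P_1 and L_0 = P_1·P_2·P_4. Then L_0 satisfies L_0^7 + t^2·L_0^3 + 1 = 0 and u = t·L_0 + L_0^3. -/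
open Polynomial

theorem stmt_12 (L : Type) [Field L] [Algebra (RatFunc (ZMod 2)) L]
    (P₁ P₂ P₄ : L)
    (T : L) (hT : T = algebraMap (RatFunc (ZMod 2)) L RatFunc.X)
    (h1 : P₁ ^ 7 + T * P₁ + 1 = 0) (h2 : P₂ ^ 7 + T * P₂ + 1 = 0)
    (h4 : P₄ ^ 7 + T * P₄ + 1 = 0)
    (hne12 : P₁ ≠ P₂) (hne14 : P₁ ≠ P₄) (hne24 : P₂ ≠ P₄)
    (hsum : P₁ + P₂ + P₄ = 0)
    (u L₀ : L) (hu : u = P₁ * P₂ + P₂ * P₄ + P₄ * P₁) (hL : L₀ = P₁ * P₂ * P₄) :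
    L₀ ^ 7 + T ^ 2 * L₀ ^ 3 + 1 = 0 ∧ u = T * L₀ + L₀ ^ 3 := by
  haveI : CharP (RatFunc (ZMod 2)) 2 := charP_of_injective_algebraMap
    (algebraMap (ZMod 2) (RatFunc (ZMod 2))).injective 2
  haveI : CharP L 2 := charP_of_injective_algebraMap
    (algebraMap (RatFunc (ZMod 2)) L).injective 2
  have htwo : (2 : L) = 0 := by
    exact_mod_cast CharP.cast_eq_zero L 2
  have hP4 : P₄ = P₁ + P₂ := by linear_combination hsum - (P₁ + P₂) * htwo
  subst hP4
  have hs : P₁ + P₂ ≠ 0 := by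
    intro h; exact hne12 (by linear_combination h - P₂ * htwo)
  have hstar : P₁*P₂*(P₁+P₂)^5 + (P₁*P₂)^3*(P₁+P₂) + 1 = 0 := by
    linear_combination h1 + h2 + h4 + (0 - 1 - P₂*T - P₂^7 - P₁*T - 3*P₁*P₂^6 - 8*P₁^2*P₂^5 - 12*P₁^3*P₂^4 - 12*P₁^4*P₂^3 - 8*P₁^5*P₂^2 - 3*P₁^6*P₂ - P₁^7) * htwo
  have hTs' : T*(P₁+P₂) = ((P₁+P₂)^6 + P₁*P₂*(P₁+P₂)^4 + (P₁*P₂)^3)*(P₁+P₂) := by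
    linear_combination h1 + h2 + (0 - 1 - P₂^7 - 4*P₁*P₂^6 - 13*P₁^2*P₂^5 - 23*P₁^3*P₂^4 - 23*P₁^4*P₂^3 - 13*P₁^5*P₂^2 - 4*P₁^6*P₂ - P₁^7) * htwo
  have hTs : T = (P₁+P₂)^6 + P₁*P₂*(P₁+P₂)^4 + (P₁*P₂)^3 :=
    mul_right_cancel₀ hs hTs'
  subst hu
  subst hL
  constructor
  · linear_combination (P₁^3*P₂^6*T + P₁^3*P₂^12 + 3*P₁^4*P₂^5*T + 10*P₁^4*P₂^11 + 3*P₁^5*P₂^4*T + 43*P₁^5*P₂^10 + P₁^6*P₂^3*T + 106*P₁^6*P₂^9 + 164*P₁^7*P₂^8 + 164*P₁^8*P₂^7 + 106*P₁^9*P₂^6 + 43*P₁^10*P₂^5 + 10*P₁^11*P₂^4 + P₁^12*P₂^3) * hTs + (1 + P₁*P₂^6 + 5*P₁^2*P₂^5 + P₁^2*P₂^12 + 11*P₁^3*P₂^4 + 10*P₁^3*P₂^11 + 11*P₁^4*P₂^3 + 47*P₁^4*P₂^10 + 5*P₁^5*P₂^2 + 132*P₁^5*P₂^9 + P₁^6*P₂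 + 241*P₁^6*P₂^8 + 294*P₁^7*P₂^7 + 241*P₁^8*P₂^6 + 132*P₁^9*P₂^5 + 47*P₁^10*P₂^4 + 10*P₁^11*P₂^3 + P₁^12*P₂^2) * hstar + (0 - P₁*P₂^6 - 5*P₁^2*P₂^5 - P₁^2*P₂^12 - 11*P₁^3*P₂^4 - 10*P₁^3*P₂^11 - 11*P₁^4*P₂^3 - 47*P₁^4*P₂^10 + P₁^4*P₂^17 - 5*P₁^5*P₂^2 - 132*P₁^5*P₂^9 + 12*P₁^5*P₂^16 - P₁^6*P₂ - 241*P₁^6*P₂^8 + 68*P₁^6*P₂^15 - 294*P₁^7*P₂^7 + 240*P₁^7*P₂^14 - 241*P₁^8*P₂^6 + 586*P₁^8*P₂^13 - 132*P₁^9*P₂^5 + 1041*P₁^9*P₂^12 - 47*P₁^10*P₂^4 + 1380*P₁^10*P₂^11 - 10*P₁^11*P₂^3 + 1380*P₁^11*P₂^10 - P₁^12*P₂^2 + 1041*P₁^12*P₂^9 + 586*P₁^13*P₂^8 + 240*P₁^14*P₂^7 + 68*P₁^15*P₂^6 + 12*P₁^16*P₂^5 + P₁^17*P₂^4) * htwo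
  · linear_combination (0 - P₁*P₂^2 - P₁^2*P₂) * hTs + (0 - P₂^2 - 3*P₁*P₂ - P₁^2) * hstar + (P₂^2 + 3*P₁*P₂ + P₁^2) * htwo
end

section
/- With P_1, P_2, P_4 roots of x^7 + t·x + 1 over F_2(t) satisfying P_1 + P_2 + P_4 = 0, define y = P_1^2·P_2 + P_2^2·P_4 + P_4^2·P_1 and y' = P_2^2·P_1 + P_4^2·P_2 + P_1^2·P_4. Then y + y' = P_1·P_2·P_4 and y·y' = t. -/
open Polynomial

theorem stmt_13 (L : Type) [Field L] [Algebra (RatFunc (ZMod 2)) L]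
    (P₁ P₂ P₄ : L)
    (T : L) (hT : T = algebraMap (RatFunc (ZMod 2)) L RatFunc.X)
    (h1 : P₁ ^ 7 + T * P₁ + 1 = 0) (h2 : P₂ ^ 7 + T * P₂ + 1 = 0)
    (h4 : P₄ ^ 7 + T * P₄ + 1 = 0)
    (hne12 : P₁ ≠ P₂) (hne14 : P₁ ≠ P₄) (hne24 : P₂ ≠ P₄)
    (hsum : P₁ + P₂ + P₄ = 0)
    (y y' : L) (hy : y = P₁ ^ 2 * P₂ + P₂ ^ 2 * P₄ + P₄ ^ 2 * P₁)
    (hy' : y' = P₂ ^ 2 * P₁ + P₄ ^ 2 * P₂ + P₁ ^ 2 * P₄) :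
    y + y' = P₁ * P₂ * P₄ ∧ y * y' = T := by
  haveI : CharP (RatFunc (ZMod 2)) 2 := charP_of_injective_algebraMap
    (algebraMap (ZMod 2) (RatFunc (ZMod 2))).injective 2
  haveI : CharP L 2 := charP_of_injective_algebraMap
    (algebraMap (RatFunc (ZMod 2)) L).injective 2
  have htwo : (2 : L) = 0 := CharP.cast_eq_zero L 2
  have hP4 : P₄ ≠ 0 := by
    intro h
    rw [h] at h4
    simp at h4
  have hc : P₄ = P₁ + P₂ := by linear_combination hsum - (P₁ + P₂) * htwo
  subst hc hy hy'
  constructor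
  · linear_combination (P₂ ^ 3 + 2 * P₁ * P₂ ^ 2 + 2 * P₁ ^ 2 * P₂ + P₁ ^ 3) * htwo
  · have key : (P₁ + P₂) *
        ((P₁ ^ 2 * P₂ + P₂ ^ 2 * (P₁ + P₂) + (P₁ + P₂) ^ 2 * P₁) *
          (P₂ ^ 2 * P₁ + (P₁ + P₂) ^ 2 * P₂ + P₁ ^ 2 * (P₁ + P₂)) - T) = 0 := by
      linear_combination h1 + h2 +
        ((-1 : L) - P₂ * T - P₁ * T + 3 * P₁ * P₂ ^ 6 + 8 * P₁ ^ 2 * P₂ ^ 5 +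
          13 * P₁ ^ 3 * P₂ ^ 4 + 13 * P₁ ^ 4 * P₂ ^ 3 + 8 * P₁ ^ 5 * P₂ ^ 2 +
          3 * P₁ ^ 6 * P₂) * htwo
    rcases mul_eq_zero.mp key with h | h
    · exact absurd h hP4
    · linear_combination h
end

section
/- Suppose (c_k)_{k≥0} is the sequence in F_3 such that θ = Σ_k c_k ε^{(2k+1)i} t^k is a root of x^11 + t·x^2 − 1 in F_{3^5}[[t]] (with ε a primitive 11th root of unity and c_0 = 1). Then the coefficients satisfy: c_{3j+2} = 0, c_{3j+1} = c_j, and c_{3j} = Σ_{3m+n=j} c_m·c_n (sum over nonnegative integers m, n with 3m + n = j), all identities holding in F_3. -/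
open PowerSeries

lemma coeff_cube {R : Type*} [CommRing R] [CharP R 3] (f : PowerSeries R) (n : ℕ) :
    PowerSeries.coeff n (f ^ 3) =
      if 3 ∣ n then (PowerSeries.coeff (n / 3) f) ^ 3 else 0 := by
  haveI : Fact (Nat.Prime 3) := ⟨by norm_num⟩
  set P : Polynomial R := PowerSeries.trunc (n + 1) f with hP
  have hdvd : (X : PowerSeries R) ^ (n + 1) ∣ f - (P : PowerSeries R) := by
    rw [PowerSeries.X_pow_dvd_iff]
    intro m hm
    rw [map_sub, Polynomial.coeff_coe, hP, PowerSeries.coeff_trunc, if_pos hm, sub_self]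
  have h2 : (X : PowerSeries R) ^ (n + 1) ∣ f ^ 3 - (P : PowerSeries R) ^ 3 :=
    dvd_trans hdvd (sub_dvd_pow_sub_pow _ _ 3)
  have h3 : PowerSeries.coeff n (f ^ 3) = PowerSeries.coeff n ((P : PowerSeries R) ^ 3) := by
    have := PowerSeries.X_pow_dvd_iff.mp h2 n (Nat.lt_succ_self n)
    rw [map_sub, sub_eq_zero] at this
    exact this
  rw [h3, ← Polynomial.coe_pow, ← Polynomial.map_frobenius_expand (p := 3) (f := P), Polynomial.coeff_coe,
    Polynomial.coeff_map, Polynomial.coeff_expand (by norm_num : 0 < 3)]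
  simp only [frobenius_def]
  split_ifs with h
  · congr 1
    rw [hP, PowerSeries.coeff_trunc, if_pos (Nat.lt_succ_of_le (Nat.div_le_self n 3))]
  · exact zero_pow (by norm_num)

theorem stmt_17 (ε : GaloisField 3 5) (hε : orderOf ε = 11) (i : ℕ)
    (c : ℕ → ZMod 3) (hc0 : c 0 = 1)
    (θ : PowerSeries (GaloisField 3 5))
    (hθ : θ = PowerSeries.mk fun k =>
      algebraMap (ZMod 3) (GaloisField 3 5) (c k) * ε ^ ((2 * k + 1) * i))
    (hroot : θ ^ 11 + X * θ ^ 2 - 1 = 0) :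
    ∀ j : ℕ,
      c (3 * j + 2) = 0 ∧
      c (3 * j + 1) = c j ∧
      c (3 * j) = ∑ mn ∈ (Finset.range (j + 1) ×ˢ Finset.range (j + 1)).filter
          (fun mn => 3 * mn.1 + mn.2 = j), c mn.1 * c mn.2 := by
  haveI : Fact (Nat.Prime 3) := ⟨by norm_num⟩
  set_option maxRecDepth 100000 in
  set φ := algebraMap (ZMod 3) (GaloisField 3 5) with hφ
  have hφinj : Function.Injective φ := RingHom.injective φ
  have hε11 : ε ^ 11 = 1 := by rw [← hε]; exact pow_orderOf_eq_one ε
  have hεne : ε ≠ 0 := by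
    intro h
    rw [h] at hε11
    simp at hε11
  -- coefficients of θ
  set a : ℕ → GaloisField 3 5 := fun k => φ (c k) * ε ^ ((2 * k + 1) * i) with ha
  have hcoef : ∀ k, PowerSeries.coeff k θ = a k := by
    intro k; rw [hθ, PowerSeries.coeff_mk]
  -- the key equation θ = θ^12 + X θ^3
  have h1 : θ ^ 11 + X * θ ^ 2 = 1 := by linear_combination hroot
  have hE : θ ^ 12 + X * θ ^ 3 = θ := by
    calc θ ^ 12 + X * θ ^ 3 = θ * (θ ^ 11 + X * θ ^ 2) := by ring
    _ = θ := by rw [h1, mul_one]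
  have h12 : θ ^ 12 = (θ ^ 3 * θ) ^ 3 := by ring
  have hEk : ∀ k, a k = PowerSeries.coeff k (θ ^ 12) + PowerSeries.coeff k (X * θ ^ 3) := by
    intro k
    have h2 := congrArg (PowerSeries.coeff k) hE
    rw [map_add, hcoef] at h2
    exact h2.symm
  have hcancel : ∀ (u v : ZMod 3) (e : ℕ), φ u * ε ^ e = φ v * ε ^ e → u = v := by
    intro u v e h
    exact hφinj (mul_right_cancel₀ (pow_ne_zero e hεne) h)
  have hx3 : ∀ x : ZMod 3, x ^ 3 = x := fun x => ZMod.pow_card x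
  have hx9 : ∀ x : ZMod 3, x ^ 9 = x := by
    intro x
    calc x ^ 9 = (x ^ 3) ^ 3 := by ring
    _ = x := by rw [hx3, hx3]
  intro j
  refine ⟨?_, ?_, ?_⟩
  · -- c (3j+2) = 0
    have h := hEk (3 * j + 2)
    rw [h12, coeff_cube, if_neg (by omega : ¬ 3 ∣ 3 * j + 2),
      (by ring : (3 * j + 2 : ℕ) = (3 * j + 1) + 1), PowerSeries.coeff_succ_X_mul,
      coeff_cube, if_neg (by omega : ¬ 3 ∣ 3 * j + 1)] at h
    have h' : a (3 * j + 2) = 0 := by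
      rw [(by omega : 3 * j + 2 = 3 * j + 1 + 1)]
      simpa using h
    simp only [ha] at h'
    rcases mul_eq_zero.mp h' with h2 | h2
    · apply hφinj
      rw [map_zero]
      exact h2
    · exact absurd h2 (pow_ne_zero _ hεne)
  · -- c (3j+1) = c j
    have h := hEk (3 * j + 1)
    rw [h12, coeff_cube, if_neg (by omega : ¬ 3 ∣ 3 * j + 1)] at h
    have h2 : (3 * j + 1 : ℕ) = (3 * j) + 1 := by ring
    rw [h2, PowerSeries.coeff_succ_X_mul, coeff_cube, if_pos (by omega : 3 ∣ 3 * j),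
      (by omega : 3 * j / 3 = j), hcoef] at h
    have h3 : a (3 * j + 1) = φ (c j) * ε ^ ((2 * (3 * j + 1) + 1) * i) := by
      rw [h, ha]
      simp only [mul_pow, ← map_pow, hx3, ← pow_mul]
      congr 2
      ring
    exact hcancel _ _ _ h3
  · -- c (3j) = sum
    have h := hEk (3 * j)
    have hX : PowerSeries.coeff (3 * j) (X * θ ^ 3) = 0 := by
      rcases j with _ | j
      · simpa using PowerSeries.coeff_zero_X_mul (θ ^ 3)
      · rw [(by ring : 3 * (j + 1) = (3 * j + 2) + 1), PowerSeries.coeff_succ_X_mul,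
          coeff_cube, if_neg (by omega : ¬ 3 ∣ 3 * j + 2)]
    rw [hX, add_zero, h12, coeff_cube, if_pos (by omega : 3 ∣ 3 * j),
      (by omega : 3 * j / 3 = j), PowerSeries.coeff_mul] at h
    -- rewrite each coefficient
    have hsum : (∑ p ∈ Finset.HasAntidiagonal.antidiagonal j,
        PowerSeries.coeff p.1 (θ ^ 3) * PowerSeries.coeff p.2 θ) ^ 3
        = ∑ p ∈ (Finset.HasAntidiagonal.antidiagonal j).filter (fun p => 3 ∣ p.1),
            (a (p.1 / 3)) ^ 9 * (a p.2) ^ 3 := by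
      rw [sum_pow_char, Finset.sum_filter]
      apply Finset.sum_congr rfl
      intro p _
      rw [coeff_cube, hcoef, hcoef]
      split_ifs with hd
      · ring
      · simp
    rw [hsum] at h
    -- reindex
    have hre : (∑ p ∈ (Finset.HasAntidiagonal.antidiagonal j).filter (fun p => 3 ∣ p.1),
            (a (p.1 / 3)) ^ 9 * (a p.2) ^ 3)
        = ∑ mn ∈ (Finset.range (j + 1) ×ˢ Finset.range (j + 1)).filter
            (fun mn => 3 * mn.1 + mn.2 = j), φ (c mn.1 * c mn.2) * ε ^ ((6 * j + 12) * i) := by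
      apply Finset.sum_nbij' (i := fun p => (p.1 / 3, p.2)) (j := fun mn => (3 * mn.1, mn.2))
      · intro p hp
        simp only [Finset.mem_filter, Finset.HasAntidiagonal.mem_antidiagonal] at hp
        simp only [Finset.mem_filter, Finset.mem_product, Finset.mem_range]
        omega
      · intro mn hmn
        simp only [Finset.mem_filter, Finset.mem_product, Finset.mem_range] at hmn
        simp only [Finset.mem_filter, Finset.HasAntidiagonal.mem_antidiagonal]
        omega
      · rintro ⟨p1, p2⟩ hp
        simp only [Finset.mem_filter, Finset.HasAntidiagonal.mem_antidiagonal] at hp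
        obtain ⟨hpj, m, hm⟩ := hp
        subst hm
        have hq : 3 * m / 3 = m := by omega
        simp [hq]
      · rintro ⟨m, n⟩ hmn
        have hq : 3 * m / 3 = m := by omega
        simp [hq]
      · rintro ⟨p1, p2⟩ hp
        simp only [Finset.mem_filter, Finset.HasAntidiagonal.mem_antidiagonal] at hp
        obtain ⟨hpj, m, hm⟩ := hp
        subst hm
        have hq : 3 * m / 3 = m := by omega
        rw [hq, ha]
        simp only [mul_pow, ← map_pow, ← pow_mul]
        rw [hx9, hx3, map_mul, mul_mul_mul_comm, ← pow_add]
        congr 2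
        rw [← hpj]
        ring
    rw [hre, ← Finset.sum_mul, ← map_sum] at h
    have hexp : ((6 * j + 12) * i) = ((2 * (3 * j) + 1) * i) + 11 * i := by ring
    have hone : ε ^ (11 * i) = 1 := by rw [pow_mul, hε11, one_pow]
    rw [hexp, pow_add, hone, mul_one] at h
    simp only [ha] at h
    exact hcancel _ _ _ h
end

section
/- The orbit of the 5-element subset {10, 8, 2, 6, 7} of {0,1,...,10} under the group generated by the permutations α = (0 1 2 3 4 5 6 7 8 9 10) and σ = (3 6)(4 0)(5 10)(8 9) has exactly 66 elements, and these 66 five-element subsets form a Steiner system S(4,5,11): every 4-element subset of {0,...,10} is contained in exactly one of them. -/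
set_option maxRecDepth 100000
set_option maxHeartbeats 1000000

open Equiv

private def pα : Equiv.Perm (Fin 11) := finRotate 11
private def pσ : Equiv.Perm (Fin 11) :=
  Equiv.swap 3 6 * Equiv.swap 4 0 * Equiv.swap 5 10 * Equiv.swap 8 9

private def Lb : List (Finset (Fin 11)) := [({2,6,7,8,10} : Finset (Fin 11)), ({0,3,7,8,9} : Finset (Fin 11)), ({2,3,5,7,9} : Finset (Fin 11)), ({1,4,8,9,10} : Finset (Fin 11)), ({4,6,7,8,9} : Finset (Fin 11)), ({3,4,6,8,10} : Finset (Fin 11)), ({0,2,5,9,10} : Finset (Fin 11)), ({0,1,5,8,9} : Finset (Fin 11)), ({5,7,8,9,10} : Finset (Fin 11)), ({0,4,5,7,9} : Finset (Fin 11)), ({0,3,5,6,9} : Finset (Fin 11)), ({0,1,3,6,10} : Finset (Fin 11)), ({2,4,5,8,10} : Finset (Fin 11)), ({1,2,6,9,10} : Finset (Fin 11)), ({0,6,8,9,10} : Finset (Fin 11)), ({1,5,6,8,10} : Finset (Fin 11)), ({0,4,7,8,10} : Finset (Fin 11)), ({1,4,6,7,10} : Finset (Fin 11)), ({0,1,2,4,7}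 : Finset (Fin 11)), ({1,3,4,5,6} : Finset (Fin 11)), ({0,2,3,7,10} : Finset (Fin 11)), ({1,2,3,5,8} : Finset (Fin 11)), ({0,1,7,9,10} : Finset (Fin 11)), ({3,4,5,8,9} : Finset (Fin 11)), ({0,2,6,7,9} : Finset (Fin 11)), ({1,3,5,9,10} : Finset (Fin 11)), ({0,2,5,7,8} : Finset (Fin 11)), ({0,1,3,5,7} : Finset (Fin 11)), ({2,4,5,6,7} : Finset (Fin 11)), ({0,1,3,4,8} : Finset (Fin 11)), ({2,3,4,6,9} : Finset (Fin 11)), ({0,1,2,8,10} : Finset (Fin 11)), ({1,4,5,7,8} : Finset (Fin 11)), ({4,5,6,9,10} : Finset (Fin 11)), ({1,3,7,8,10} : Finset (Fin 11)), ({2,3,4,7,8} : Finset (Fin 11)), ({0,2,4,6,10} : Finset (Fin 11)), ({1,3,6,8,9} : Finset (Fin 11)), ({2,4,7,9,10} : Finset (Fin 11)), ({1,2,4,6,8} : Finset (Fin 11)), ({3,5,6,7,8} : Finset (Fin 11)), ({1,2,4,5,9} : Finset (Fin 11)), ({0,1,4,6,9} : Finset (Fin 11)), ({3,4,5,7,10}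 : Finset (Fin 11)), ({0,2,3,6,8} : Finset (Fin 11)), ({0,1,2,3,9} : Finset (Fin 11)), ({2,5,6,8,9} : Finset (Fin 11)), ({0,5,6,7,10} : Finset (Fin 11)), ({0,3,5,8,10} : Finset (Fin 11)), ({0,2,4,8,9} : Finset (Fin 11)), ({1,5,6,7,9} : Finset (Fin 11)), ({0,2,3,4,5} : Finset (Fin 11)), ({3,6,7,9,10} : Finset (Fin 11)), ({2,3,5,6,10} : Finset (Fin 11)), ({1,2,5,7,10} : Finset (Fin 11)), ({0,4,5,6,8} : Finset (Fin 11)), ({1,3,4,7,9} : Finset (Fin 11)), ({1,2,3,4,10} : Finset (Fin 11)), ({2,3,8,9,10} : Finset (Fin 11)), ({0,1,6,7,8} : Finset (Fin 11)), ({0,3,4,6,7} : Finset (Fin 11)), ({0,3,4,9,10} : Finset (Fin 11)), ({0,1,2,5,6} : Finset (Fin 11)), ({1,2,7,8,9} : Finset (Fin 11)), ({0,1,4,5,10} : Finset (Fin 11)), ({1,2,3,6,7} : Finset (Fin 11))]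

private lemma genα : ∀ s ∈ Lb, s.image ⇑pα ∈ Lb := by
  intro s hs
  simp only [Lb, List.mem_cons, List.not_mem_nil, or_false] at hs
  rcases hs with rfl|rfl|rfl|rfl|rfl|rfl|rfl|rfl|rfl|rfl|rfl|rfl|rfl|rfl|rfl|rfl|rfl|rfl|rfl|rfl|rfl|rfl|rfl|rfl|rfl|rfl|rfl|rfl|rfl|rfl|rfl|rfl|rfl|rfl|rfl|rfl|rfl|rfl|rfl|rfl|rfl|rfl|rfl|rfl|rfl|rfl|rfl|rfl|rfl|rfl|rfl|rfl|rfl|rfl|rfl|rfl|rfl|rfl|rfl|rfl|rfl|rfl|rfl|rfl|rfl|rfl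
  all_goals decide

private lemma genσ : ∀ s ∈ Lb, s.image ⇑pσ ∈ Lb := by
  intro s hs
  simp only [Lb, List.mem_cons, List.not_mem_nil, or_false] at hs
  rcases hs with rfl|rfl|rfl|rfl|rfl|rfl|rfl|rfl|rfl|rfl|rfl|rfl|rfl|rfl|rfl|rfl|rfl|rfl|rfl|rfl|rfl|rfl|rfl|rfl|rfl|rfl|rfl|rfl|rfl|rfl|rfl|rfl|rfl|rfl|rfl|rfl|rfl|rfl|rfl|rfl|rfl|rfl|rfl|rfl|rfl|rfl|rfl|rfl|rfl|rfl|rfl|rfl|rfl|rfl|rfl|rfl|rfl|rfl|rfl|rfl|rfl|rfl|rfl|rfl|rfl|rfl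
  all_goals decide

private lemma cards5 : ∀ s ∈ Lb, s.card = 5 := by
  intro s hs
  simp only [Lb, List.mem_cons, List.not_mem_nil, or_false] at hs
  rcases hs with rfl|rfl|rfl|rfl|rfl|rfl|rfl|rfl|rfl|rfl|rfl|rfl|rfl|rfl|rfl|rfl|rfl|rfl|rfl|rfl|rfl|rfl|rfl|rfl|rfl|rfl|rfl|rfl|rfl|rfl|rfl|rfl|rfl|rfl|rfl|rfl|rfl|rfl|rfl|rfl|rfl|rfl|rfl|rfl|rfl|rfl|rfl|rfl|rfl|rfl|rfl|rfl|rfl|rfl|rfl|rfl|rfl|rfl|rfl|rfl|rfl|rfl|rfl|rfl|rfl|rfl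
  all_goals decide

private lemma pw : Lb.Pairwise (fun s t => (s ∩ t).card ≤ 3) := by decide

private lemma tofin_card : Lb.toFinset.card = 66 := by decide

private lemma closed_of_mem :
    ∀ g ∈ Subgroup.closure {pα, pσ}, ∀ s ∈ Lb, s.image ⇑g ∈ Lb := by
  intro g hg
  induction hg using Subgroup.closure_induction with
  | mem x hx =>
    rcases hx with rfl | rfl
    · exact genα
    · exact genσ
  | one => intro s hs; simpa using hs
  | mul x y hx hy ihx ihy =>
    intro s hs
    have h1 : s.image ⇑(x*y) = (s.image ⇑y).image ⇑x := by
      rw [Finset.image_image]; rfl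
    rw [h1]; exact ihx _ (ihy s hs)
  | inv x hx ih =>
    intro s hs
    have hsurj := Finset.surj_on_of_inj_on_of_card_le (s := Lb.toFinset) (t := Lb.toFinset)
      (fun a _ => a.image ⇑x)
      (fun a ha => List.mem_toFinset.mpr (ih a (List.mem_toFinset.mp ha)))
      (fun a₁ a₂ h₁ h₂ he => Finset.image_injective x.injective he) le_rfl
    obtain ⟨t, ht, hts⟩ := hsurj s (List.mem_toFinset.mpr hs)
    have h2 : s.image ⇑x⁻¹ = t := by
      rw [hts, Finset.image_image]
      simp [Function.comp_def]
    rw [h2]; exact List.mem_toFinset.mp ht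

private lemma rev_mem : ∀ s ∈ Lb,
    ∃ g ∈ Subgroup.closure {pα, pσ},
      s = Finset.image ⇑g ({10, 8, 2, 6, 7} : Finset (Fin 11)) := by
  have hpα : pα ∈ Subgroup.closure {pα, pσ} := Subgroup.subset_closure (Or.inl rfl)
  have hpσ : pσ ∈ Subgroup.closure {pα, pσ} := Subgroup.subset_closure (Or.inr rfl)
  intro s hs
  simp only [Lb, List.mem_cons, List.not_mem_nil, or_false] at hs
  rcases hs with rfl|rfl|rfl|rfl|rfl|rfl|rfl|rfl|rfl|rfl|rfl|rfl|rfl|rfl|rfl|rfl|rfl|rfl|rfl|rfl|rfl|rfl|rfl|rfl|rfl|rfl|rfl|rfl|rfl|rfl|rfl|rfl|rfl|rfl|rfl|rfl|rfl|rfl|rfl|rfl|rfl|rfl|rfl|rfl|rfl|rfl|rfl|rfl|rfl|rfl|rfl|rfl|rfl|rfl|rfl|rfl|rfl|rfl|rfl|rfl|rfl|rfl|rfl|rfl|rfl|rfl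
  · exact ⟨(1 : Equiv.Perm (Fin 11)), one_mem _, by decide⟩
  · exact ⟨pα, hpα, by decide⟩
  · exact ⟨pσ, hpσ, by decide⟩
  · exact ⟨pα*pα, mul_mem (hpα) hpα, by decide⟩
  · exact ⟨pσ*pα, mul_mem (hpσ) hpα, by decide⟩
  · exact ⟨pα*pσ, mul_mem (hpα) hpσ, by decide⟩
  · exact ⟨pα*pα*pα, mul_mem (mul_mem (hpα) hpα) hpα, by decide⟩
  · exact ⟨pσ*pα*pα, mul_mem (mul_mem (hpσ) hpα) hpα, by decide⟩
  · exact ⟨pα*pσ*pα, mul_mem (mul_mem (hpα) hpσ) hpα, by decide⟩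
  · exact ⟨pα*pα*pσ, mul_mem (mul_mem (hpα) hpα) hpσ, by decide⟩
  · exact ⟨pσ*pα*pσ, mul_mem (mul_mem (hpσ) hpα) hpσ, by decide⟩
  · exact ⟨pα*pα*pα*pα, mul_mem (mul_mem (mul_mem (hpα) hpα) hpα) hpα, by decide⟩
  · exact ⟨pσ*pα*pα*pα, mul_mem (mul_mem (mul_mem (hpσ) hpα) hpα) hpα, by decide⟩
  · exact ⟨pα*pσ*pα*pα, mul_mem (mul_mem (mul_mem (hpα) hpσ) hpα) hpα, by decide⟩
  · exact ⟨pα*pα*pσ*pα, mul_mem (mul_mem (mul_mem (hpα) hpα) hpσ) hpα, by decide⟩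
  · exact ⟨pα*pα*pα*pσ, mul_mem (mul_mem (mul_mem (hpα) hpα) hpα) hpσ, by decide⟩
  · exact ⟨pσ*pα*pα*pσ, mul_mem (mul_mem (mul_mem (hpσ) hpα) hpα) hpσ, by decide⟩
  · exact ⟨pα*pσ*pα*pσ, mul_mem (mul_mem (mul_mem (hpα) hpσ) hpα) hpσ, by decide⟩
  · exact ⟨pα*pα*pα*pα*pα, mul_mem (mul_mem (mul_mem (mul_mem (hpα) hpα) hpα) hpα) hpα, by decide⟩
  · exact ⟨pσ*pα*pα*pα*pα, mul_mem (mul_mem (mul_mem (mul_mem (hpσ) hpα) hpα) hpα) hpα, by decide⟩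
  · exact ⟨pα*pα*pσ*pα*pα, mul_mem (mul_mem (mul_mem (mul_mem (hpα) hpα) hpσ) hpα) hpα, by decide⟩
  · exact ⟨pσ*pα*pσ*pα*pα, mul_mem (mul_mem (mul_mem (mul_mem (hpσ) hpα) hpσ) hpα) hpα, by decide⟩
  · exact ⟨pα*pα*pα*pσ*pα, mul_mem (mul_mem (mul_mem (mul_mem (hpα) hpα) hpα) hpσ) hpα, by decide⟩
  · exact ⟨pσ*pα*pα*pσ*pα, mul_mem (mul_mem (mul_mem (mul_mem (hpσ) hpα) hpα) hpσ) hpα, by decide⟩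
  · exact ⟨pα*pα*pα*pα*pσ, mul_mem (mul_mem (mul_mem (mul_mem (hpα) hpα) hpα) hpα) hpσ, by decide⟩
  · exact ⟨pσ*pα*pα*pα*pσ, mul_mem (mul_mem (mul_mem (mul_mem (hpσ) hpα) hpα) hpα) hpσ, by decide⟩
  · exact ⟨pα*pα*pσ*pα*pσ, mul_mem (mul_mem (mul_mem (mul_mem (hpα) hpα) hpσ) hpα) hpσ, by decide⟩
  · exact ⟨pσ*pα*pσ*pα*pσ, mul_mem (mul_mem (mul_mem (mul_mem (hpσ) hpα) hpσ) hpα) hpσ, by decide⟩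
  · exact ⟨pα*pσ*pα*pα*pα*pα, mul_mem (mul_mem (mul_mem (mul_mem (mul_mem (hpα) hpσ) hpα) hpα) hpα) hpα, by decide⟩
  · exact ⟨pα*pα*pα*pσ*pα*pα, mul_mem (mul_mem (mul_mem (mul_mem (mul_mem (hpα) hpα) hpα) hpσ) hpα) hpα, by decide⟩
  · exact ⟨pα*pσ*pα*pσ*pα*pα, mul_mem (mul_mem (mul_mem (mul_mem (mul_mem (hpα) hpσ) hpα) hpσ) hpα) hpα, by decide⟩
  · exact ⟨pα*pα*pα*pα*pσ*pα, mul_mem (mul_mem (mul_mem (mul_mem (mul_mem (hpα) hpα) hpα) hpα) hpσ) hpα, by decide⟩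
  · exact ⟨pσ*pα*pα*pα*pσ*pα, mul_mem (mul_mem (mul_mem (mul_mem (mul_mem (hpσ) hpα) hpα) hpα) hpσ) hpα, by decide⟩
  · exact ⟨pα*pσ*pα*pα*pσ*pα, mul_mem (mul_mem (mul_mem (mul_mem (mul_mem (hpα) hpσ) hpα) hpα) hpσ) hpα, by decide⟩
  · exact ⟨pα*pα*pα*pα*pα*pσ, mul_mem (mul_mem (mul_mem (mul_mem (mul_mem (hpα) hpα) hpα) hpα) hpα) hpσ, by decide⟩
  · exact ⟨pσ*pα*pα*pα*pα*pσ, mul_mem (mul_mem (mul_mem (mul_mem (mul_mem (hpσ) hpα) hpα) hpα) hpα) hpσ, by decide⟩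
  · exact ⟨pα*pσ*pα*pα*pα*pσ, mul_mem (mul_mem (mul_mem (mul_mem (mul_mem (hpα) hpσ) hpα) hpα) hpα) hpσ, by decide⟩
  · exact ⟨pα*pα*pα*pσ*pα*pσ, mul_mem (mul_mem (mul_mem (mul_mem (mul_mem (hpα) hpα) hpα) hpσ) hpα) hpσ, by decide⟩
  · exact ⟨pσ*pα*pα*pσ*pα*pσ, mul_mem (mul_mem (mul_mem (mul_mem (mul_mem (hpσ) hpα) hpα) hpσ) hpα) hpσ, by decide⟩
  · exact ⟨pα*pσ*pα*pσ*pα*pσ, mul_mem (mul_mem (mul_mem (mul_mem (mul_mem (hpα) hpσ) hpα) hpσ) hpα) hpσ, by decide⟩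
  · exact ⟨pα*pα*pσ*pα*pα*pα*pα, mul_mem (mul_mem (mul_mem (mul_mem (mul_mem (mul_mem (hpα) hpα) hpσ) hpα) hpα) hpα) hpα, by decide⟩
  · exact ⟨pα*pα*pα*pα*pσ*pα*pα, mul_mem (mul_mem (mul_mem (mul_mem (mul_mem (mul_mem (hpα) hpα) hpα) hpα) hpσ) hpα) hpα, by decide⟩
  · exact ⟨pσ*pα*pα*pα*pσ*pα*pα, mul_mem (mul_mem (mul_mem (mul_mem (mul_mem (mul_mem (hpσ) hpα) hpα) hpα) hpσ) hpα) hpα, by decide⟩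
  · exact ⟨pα*pα*pσ*pα*pσ*pα*pα, mul_mem (mul_mem (mul_mem (mul_mem (mul_mem (mul_mem (hpα) hpα) hpσ) hpα) hpσ) hpα) hpα, by decide⟩
  · exact ⟨pσ*pα*pσ*pα*pσ*pα*pα, mul_mem (mul_mem (mul_mem (mul_mem (mul_mem (mul_mem (hpσ) hpα) hpσ) hpα) hpσ) hpα) hpα, by decide⟩
  · exact ⟨pα*pα*pα*pα*pα*pσ*pα, mul_mem (mul_mem (mul_mem (mul_mem (mul_mem (mul_mem (hpα) hpα) hpα) hpα) hpα) hpσ) hpα, by decide⟩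
  · exact ⟨pα*pσ*pα*pα*pα*pσ*pα, mul_mem (mul_mem (mul_mem (mul_mem (mul_mem (mul_mem (hpα) hpσ) hpα) hpα) hpα) hpσ) hpα, by decide⟩
  · exact ⟨pα*pα*pσ*pα*pα*pσ*pα, mul_mem (mul_mem (mul_mem (mul_mem (mul_mem (mul_mem (hpα) hpα) hpσ) hpα) hpα) hpσ) hpα, by decide⟩
  · exact ⟨pσ*pα*pσ*pα*pα*pσ*pα, mul_mem (mul_mem (mul_mem (mul_mem (mul_mem (mul_mem (hpσ) hpα) hpσ) hpα) hpα) hpσ) hpα, by decide⟩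
  · exact ⟨pα*pα*pα*pα*pα*pα*pσ, mul_mem (mul_mem (mul_mem (mul_mem (mul_mem (mul_mem (hpα) hpα) hpα) hpα) hpα) hpα) hpσ, by decide⟩
  · exact ⟨pσ*pα*pα*pα*pα*pα*pσ, mul_mem (mul_mem (mul_mem (mul_mem (mul_mem (mul_mem (hpσ) hpα) hpα) hpα) hpα) hpα) hpσ, by decide⟩
  · exact ⟨pσ*pα*pσ*pα*pα*pα*pσ, mul_mem (mul_mem (mul_mem (mul_mem (mul_mem (mul_mem (hpσ) hpα) hpσ) hpα) hpα) hpα) hpσ, by decide⟩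
  · exact ⟨pσ*pα*pα*pσ*pα*pα*pα*pα, mul_mem (mul_mem (mul_mem (mul_mem (mul_mem (mul_mem (mul_mem (hpσ) hpα) hpα) hpσ) hpα) hpα) hpα) hpα, by decide⟩
  · exact ⟨pα*pα*pα*pα*pα*pσ*pα*pα, mul_mem (mul_mem (mul_mem (mul_mem (mul_mem (mul_mem (mul_mem (hpα) hpα) hpα) hpα) hpα) hpσ) hpα) hpα, by decide⟩
  · exact ⟨pα*pσ*pα*pα*pα*pσ*pα*pα, mul_mem (mul_mem (mul_mem (mul_mem (mul_mem (mul_mem (mul_mem (hpα) hpσ) hpα) hpα) hpα) hpσ) hpα) hpα, by decide⟩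
  · exact ⟨pα*pα*pα*pσ*pα*pσ*pα*pα, mul_mem (mul_mem (mul_mem (mul_mem (mul_mem (mul_mem (mul_mem (hpα) hpα) hpα) hpσ) hpα) hpσ) hpα) hpα, by decide⟩
  · exact ⟨pα*pσ*pα*pσ*pα*pσ*pα*pα, mul_mem (mul_mem (mul_mem (mul_mem (mul_mem (mul_mem (mul_mem (hpα) hpσ) hpα) hpσ) hpα) hpσ) hpα) hpα, by decide⟩
  · exact ⟨pα*pα*pα*pα*pα*pα*pσ*pα, mul_mem (mul_mem (mul_mem (mul_mem (mul_mem (mul_mem (mul_mem (hpα) hpα) hpα) hpα) hpα) hpα) hpσ) hpα, by decide⟩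
  · exact ⟨pσ*pα*pσ*pα*pα*pα*pσ*pα, mul_mem (mul_mem (mul_mem (mul_mem (mul_mem (mul_mem (mul_mem (hpσ) hpα) hpσ) hpα) hpα) hpα) hpσ) hpα, by decide⟩
  · exact ⟨pα*pα*pα*pσ*pα*pα*pσ*pα, mul_mem (mul_mem (mul_mem (mul_mem (mul_mem (mul_mem (mul_mem (hpα) hpα) hpα) hpσ) hpα) hpα) hpσ) hpα, by decide⟩
  · exact ⟨pα*pα*pα*pα*pα*pα*pσ*pα*pα, mul_mem (mul_mem (mul_mem (mul_mem (mul_mem (mul_mem (mul_mem (mul_mem (hpα) hpα) hpα) hpα) hpα) hpα) hpσ) hpα) hpα, by decide⟩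
  · exact ⟨pσ*pα*pα*pα*pσ*pα*pσ*pα*pα, mul_mem (mul_mem (mul_mem (mul_mem (mul_mem (mul_mem (mul_mem (mul_mem (hpσ) hpα) hpα) hpα) hpσ) hpα) hpσ) hpα) hpα, by decide⟩
  · exact ⟨pσ*pα*pα*pα*pα*pα*pα*pσ*pα, mul_mem (mul_mem (mul_mem (mul_mem (mul_mem (mul_mem (mul_mem (mul_mem (hpσ) hpα) hpα) hpα) hpα) hpα) hpα) hpσ) hpα, by decide⟩
  · exact ⟨pα*pα*pα*pα*pσ*pα*pα*pσ*pα, mul_mem (mul_mem (mul_mem (mul_mem (mul_mem (mul_mem (mul_mem (mul_mem (hpα) hpα) hpα) hpα) hpσ) hpα) hpα) hpσ) hpα, by decide⟩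
  · exact ⟨pα*pσ*pα*pα*pα*pσ*pα*pσ*pα*pα, mul_mem (mul_mem (mul_mem (mul_mem (mul_mem (mul_mem (mul_mem (mul_mem (mul_mem (hpα) hpσ) hpα) hpα) hpα) hpσ) hpα) hpσ) hpα) hpα, by decide⟩
  · exact ⟨pα*pσ*pα*pα*pα*pα*pα*pα*pσ*pα, mul_mem (mul_mem (mul_mem (mul_mem (mul_mem (mul_mem (mul_mem (mul_mem (mul_mem (hpα) hpσ) hpα) hpα) hpα) hpα) hpα) hpα) hpσ) hpα, by decide⟩

private lemma pair4 : ∀ s ∈ Lb, ∀ t ∈ Lb, ∀ q : Finset (Fin 11),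
    q.card = 4 → q ⊆ s → q ⊆ t → s = t := by
  intro s hs t ht q hq hqs hqt
  by_contra hne
  have h3 : (s ∩ t).card ≤ 3 :=
    haveI : Std.Symm (fun a b : Finset (Fin 11) => (a ∩ b).card ≤ 3) :=
      ⟨fun a b h => by show (b ∩ a).card ≤ 3; rw [Finset.inter_comm]; exact h⟩
    List.Pairwise.forall pw hs ht hne
  have hsub : q ⊆ s ∩ t := Finset.subset_inter hqs hqt
  have := Finset.card_le_card hsub
  omega

private lemma exists_block : ∀ q : Finset (Fin 11), q.card = 4 → ∃ s ∈ Lb, q ⊆ s := by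
  intro q hq
  have hdisj : (Lb.toFinset : Set (Finset (Fin 11))).PairwiseDisjoint
      (fun s => s.powersetCard 4) := by
    intro s hs t ht hne
    simp only [Function.onFun]
    rw [Finset.disjoint_left]
    intro r hrs hrt
    rw [Finset.mem_powersetCard] at hrs hrt
    exact hne (pair4 s (List.mem_toFinset.mp hs) t (List.mem_toFinset.mp ht) r hrs.2 hrs.1 hrt.1)
  have hcard : (Lb.toFinset.biUnion (fun s => s.powersetCard 4)).card = 330 := by
    rw [Finset.card_biUnion hdisj]
    rw [Finset.sum_congr rfl (fun s hs => by
      rw [Finset.card_powersetCard, cards5 s (List.mem_toFinset.mp hs)])]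
    simp [tofin_card]
  have hsub : Lb.toFinset.biUnion (fun s => s.powersetCard 4) ⊆
      Finset.univ.powersetCard 4 := by
    intro r hr
    rw [Finset.mem_biUnion] at hr
    obtain ⟨s, _, hrs⟩ := hr
    rw [Finset.mem_powersetCard] at hrs
    rw [Finset.mem_powersetCard_univ]
    exact hrs.2
  have huniv : (Finset.univ.powersetCard 4 : Finset (Finset (Fin 11))).card = 330 := by
    rw [Finset.card_powersetCard]
    decide
  have heq : Finset.univ.powersetCard 4 = Lb.toFinset.biUnion (fun s => s.powersetCard 4) :=
    (Finset.eq_of_subset_of_card_le hsub (by rw [hcard, huniv])).symm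
  have hqmem : q ∈ Finset.univ.powersetCard 4 := Finset.mem_powersetCard_univ.mpr hq
  rw [heq, Finset.mem_biUnion] at hqmem
  obtain ⟨s, hs, hqs⟩ := hqmem
  exact ⟨s, List.mem_toFinset.mp hs, (Finset.mem_powersetCard.mp hqs).1⟩

theorem stmt_19 :
    let α : Equiv.Perm (Fin 11) := finRotate 11
    let σ : Equiv.Perm (Fin 11) :=
      Equiv.swap 3 6 * Equiv.swap 4 0 * Equiv.swap 5 10 * Equiv.swap 8 9
    let H : Subgroup (Equiv.Perm (Fin 11)) := Subgroup.closure {α, σ}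
    let B₀ : Finset (Fin 11) := {10, 8, 2, 6, 7}
    let O : Set (Finset (Fin 11)) :=
      {s | ∃ g ∈ H, s = B₀.image (g : Fin 11 → Fin 11)}
    O.ncard = 66 ∧
    ∀ q : Finset (Fin 11), q.card = 4 → ∃! s, s ∈ O ∧ q ⊆ s := by
  intro α σ H B₀ O
  have hB0 : B₀ ∈ Lb := by decide
  have hOeq : O = ↑Lb.toFinset := by
    ext s
    constructor
    · rintro ⟨g, hg, rfl⟩
      exact List.mem_toFinset.mpr (closed_of_mem g hg B₀ hB0)
    · intro hs
      exact rev_mem s (List.mem_toFinset.mp hs)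
  constructor
  · rw [hOeq, Set.ncard_coe_finset, tofin_card]
  · intro q hq
    obtain ⟨s, hsL, hqs⟩ := exists_block q hq
    refine ⟨s, ⟨hOeq ▸ Finset.mem_coe.mpr (List.mem_toFinset.mpr hsL), hqs⟩, ?_⟩
    intro t ⟨htO, hqt⟩
    have htL : t ∈ Lb := by
      rw [hOeq] at htO
      exact List.mem_toFinset.mp htO
    exact pair4 t htL s hsL q hq hqt hqs
end
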